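/- arXiv:1009.4711 — 6 statements merged into one kernel-verified Lean document; each statement's English description precedes it below -/
import Mathlib

section
/- Let n ≥ 0 and let (x,p) be an element of the concrete model of Rees(𝒞_n, C_{n+1}) other than 0̂ and 1̂, and set k = n+1 − s(x) (its corank, so k ≥ 1). Then the Möbius function of the interval [(x,p), 1̂] satisfies μ((x,p), 1̂) = (−1)^k · (k−1)!. -/
/-- The number of coordinates of `x ∈ {0,1,*}ⁿ` equal to `*` (encoded as `2`). -/
def starCount {n : ℕ} (x : Fin n → Fin 3) : ℕ :=
  (Finset.univ.filter fun a => x a = 2).card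

/-- The proper part of the concrete model of `Rees(𝒞_n, C_{n+1})`: pairs `(x, i)`
with `x ∈ {0,1,*}ⁿ` (with `*` encoded as `2`) and `1 ≤ i ≤ s(x) + 1`. -/
def CubeReesElt (n : ℕ) : Type :=
  {xi : (Fin n → Fin 3) × ℕ // 1 ≤ xi.2 ∧ xi.2 ≤ starCount xi.1 + 1}

/-- The order: `(x,i) ≤ (y,j)` iff every coordinate of `y` equals the corresponding
coordinate of `x` or is `*`, `i ≤ j`, and `j - i ≤ s(y) - s(x)`. -/
instance (n : ℕ) : PartialOrder (CubeReesElt n) where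
  le a b := (∀ c, b.1.1 c = a.1.1 c ∨ b.1.1 c = 2) ∧ a.1.2 ≤ b.1.2 ∧
    b.1.2 + starCount a.1.1 ≤ a.1.2 + starCount b.1.1
  le_refl a := ⟨fun c => Or.inl rfl, le_refl _, le_refl _⟩
  le_trans a b c hab hbc :=
    ⟨fun d => by
      rcases hbc.1 d with h | h
      · rw [h]; exact hab.1 d
      · exact Or.inr h,
     hab.2.1.trans hbc.2.1, by
      have h1 := hab.2.2; have h2 := hbc.2.2; omega⟩
  le_antisymm a b hab hba := by
    apply Subtype.ext
    apply Prod.ext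
    · funext c
      rcases hab.1 c with h | h
      · exact h.symm
      · rcases hba.1 c with h' | h'
        · exact h'
        · rw [h, h']
    · exact le_antisymm hab.2.1 hba.2.1

/-- The concrete model of `Rees(𝒞_n, C_{n+1})`: the proper part together with an
adjoined minimum `⊥` and maximum `⊤`. -/
abbrev CubeRees (n : ℕ) : Type := WithBot (WithTop (CubeReesElt n))
/-- Candidate Möbius values for intervals of the Rees product. -/
def M : ℕ → ℕ → ℤ
  | m, d =>
    if m = 0 then 1
    else - ∑ t ∈ (Finset.range m).attach, ((m.choose t.1 : ℤ) *
        ∑ e ∈ Finset.Icc (d - (m - t.1)) (min d t.1), M t.1 e)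
  termination_by m _ => m
  decreasing_by exact Finset.mem_range.mp t.2

lemma M_zero (d : ℕ) : M 0 d = 1 := by rw [M]; simp

lemma M_pos (m d : ℕ) (hm : m ≠ 0) :
    M m d = - ∑ t ∈ Finset.range m, ((m.choose t : ℤ) *
        ∑ e ∈ Finset.Icc (d - (m - t)) (min d t), M t e) := by
  rw [M]; rw [if_neg hm, ← Finset.sum_attach (Finset.range m)
    (fun t => (m.choose t : ℤ) * ∑ e ∈ Finset.Icc (d - (m - t)) (min d t), M t e)]

lemma sum_G (m d : ℕ) (hm : m ≠ 0) (hd : d ≤ m) :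
    ∑ t ∈ Finset.range (m + 1), ((m.choose t : ℤ) *
        ∑ e ∈ Finset.Icc (d - (m - t)) (min d t), M t e) = 0 := by
  rw [Finset.sum_range_succ]
  have h1 : min d m = d := min_eq_left hd
  have h2 : d - (m - m) = d := by omega
  rw [h1, h2, Finset.Icc_self, Finset.sum_singleton, Nat.choose_self, M_pos m d hm]
  push_cast
  ring

/-- `f m = ∑_{d=0}^m M m d`. -/
def fM (m : ℕ) : ℤ := ∑ d ∈ Finset.range (m + 1), M m d

lemma fM_zero : fM 0 = 1 := by simp [fM, M_zero]

lemma fM_rec (m : ℕ) (hm : m ≠ 0) :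
    fM m = - ∑ t ∈ Finset.range m, ((m.choose t : ℤ) * ((m : ℤ) - t + 1) * fM t) := by
  unfold fM
  have key : ∀ t ∈ Finset.range m,
      ∑ d ∈ Finset.range (m + 1), ∑ e ∈ Finset.Icc (d - (m - t)) (min d t), M t e
        = ((m : ℤ) - t + 1) * ∑ e ∈ Finset.range (t + 1), M t e := by
    intro t ht
    rw [Finset.mem_range] at ht
    have step1 : ∀ d, ∑ e ∈ Finset.Icc (d - (m - t)) (min d t), M t e
        = ∑ e ∈ Finset.range (t + 1), if d - (m - t) ≤ e ∧ e ≤ min d t then M t e else 0 := by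
      intro d
      rw [← Finset.sum_filter]
      congr 1
      ext e
      simp only [Finset.mem_Icc, Finset.mem_filter, Finset.mem_range]
      omega
    simp_rw [step1]
    rw [Finset.sum_comm]
    rw [Finset.mul_sum]
    refine Finset.sum_congr rfl fun e he => ?_
    rw [Finset.mem_range] at he
    rw [← Finset.sum_filter]
    have hfe : (Finset.range (m + 1)).filter (fun d => d - (m - t) ≤ e ∧ e ≤ min d t)
        = Finset.Icc e (e + (m - t)) := by
      ext d
      simp only [Finset.mem_filter, Finset.mem_range, Finset.mem_Icc]
      omega
    rw [hfe, Finset.sum_const, Nat.card_Icc]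
    have : e + (m - t) + 1 - e = (m - t) + 1 := by omega
    rw [this, nsmul_eq_mul]
    congr 1
    push_cast
    omega
  calc ∑ d ∈ Finset.range (m + 1), M m d
      = ∑ d ∈ Finset.range (m + 1), - ∑ t ∈ Finset.range m, ((m.choose t : ℤ) *
          ∑ e ∈ Finset.Icc (d - (m - t)) (min d t), M t e) :=
        Finset.sum_congr rfl fun d _ => M_pos m d hm
    _ = - ∑ d ∈ Finset.range (m + 1), ∑ t ∈ Finset.range m, ((m.choose t : ℤ) *
          ∑ e ∈ Finset.Icc (d - (m - t)) (min d t), M t e) := by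
        rw [Finset.sum_neg_distrib]
    _ = - ∑ t ∈ Finset.range m, ∑ d ∈ Finset.range (m + 1), ((m.choose t : ℤ) *
          ∑ e ∈ Finset.Icc (d - (m - t)) (min d t), M t e) := by
        rw [Finset.sum_comm]
    _ = - ∑ t ∈ Finset.range m, ((m.choose t : ℤ) * ((m : ℤ) - t + 1) * fM t) := by
        congr 1
        refine Finset.sum_congr rfl fun t ht => ?_
        rw [← Finset.mul_sum, key t ht, fM]
        ring
lemma choose_cast_id (K t : ℕ) :
    ((K + 1).choose t : ℤ) * ((K : ℤ) + 1 - t) = ((K : ℤ) + 1) * (K.choose t : ℤ) := by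
  rcases le_or_gt t (K + 1) with ht | ht
  · have h1 := Nat.choose_succ_right_eq (K + 1) t
    have h2 := Nat.add_one_mul_choose_eq K t
    have h : (K + 1).choose t * (K + 1 - t) = (K + 1) * K.choose t := by
      rw [← h1, h2]
    have := congrArg (fun z : ℕ => (z : ℤ)) h
    push_cast [ht] at this
    linarith [this]
  · rcases Nat.lt_or_ge t (K + 2) with h | h
    · exact (by omega : False).elim
    · rw [Nat.choose_eq_zero_of_lt (by omega), Nat.choose_eq_zero_of_lt (by omega)]
      simp

lemma fM_sum (K : ℕ) :
    ∑ t ∈ Finset.range (K + 1), (K.choose t : ℤ) * fM t = (-1) ^ K * (K.factorial : ℤ) := by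
  induction K with
  | zero => simp [fM_zero]
  | succ K ih =>
    rw [Finset.sum_range_succ, Nat.choose_self, fM_rec (K + 1) (by omega)]
    have h2 : ∀ t ∈ Finset.range (K + 1),
        (((K + 1).choose t : ℤ) * (((K + 1 : ℕ) : ℤ) - t + 1) * fM t)
        = ((K + 1).choose t : ℤ) * fM t + ((K : ℤ) + 1) * ((K.choose t : ℤ) * fM t) := by
      intro t _
      have := choose_cast_id K t
      push_cast
      linear_combination (fM t) * this
    rw [Finset.sum_congr rfl h2, Finset.sum_add_distrib, ← Finset.mul_sum, ih,
      Nat.factorial_succ]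
    push_cast
    ring
namespace CR
variable {n : ℕ}

lemma le_iff (a b : CubeReesElt n) : a ≤ b ↔
    ((∀ c, b.1.1 c = a.1.1 c ∨ b.1.1 c = 2) ∧ a.1.2 ≤ b.1.2 ∧
      b.1.2 + starCount a.1.1 ≤ a.1.2 + starCount b.1.1) := Iff.rfl

/-- fill in stars at positions of `S`. -/
def mk (x : Fin n → Fin 3) (S : Finset (Fin n)) : Fin n → Fin 3 :=
  fun c => if c ∈ S then 2 else x c

lemma starCount_mk (x : Fin n → Fin 3) (S : Finset (Fin n)) (hS : ∀ c ∈ S, x c ≠ 2) :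
    starCount (mk x S) = starCount x + S.card := by
  unfold starCount
  have h : (Finset.univ.filter fun c => mk x S c = 2)
      = (Finset.univ.filter fun c => x c = 2) ∪ S := by
    ext c
    simp only [Finset.mem_filter, Finset.mem_univ, true_and, Finset.mem_union, mk]
    by_cases h1 : c ∈ S <;> simp [h1]
  rw [h, Finset.card_union_of_disjoint]
  rw [Finset.disjoint_left]
  intro c hc hcS
  exact hS c hcS (Finset.mem_filter.mp hc).2

lemma star_le {a b : CubeReesElt n} (h : a ≤ b) :
    starCount a.1.1 ≤ starCount b.1.1 := by
  unfold starCount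
  apply Finset.card_le_card
  intro c hc
  simp only [Finset.mem_filter, Finset.mem_univ, true_and] at hc ⊢
  rcases h.1 c with h' | h'
  · rw [h', hc]
  · exact h'

lemma eq_of_le_of_star_eq {a b : CubeReesElt n} (h : a ≤ b)
    (hs : starCount a.1.1 = starCount b.1.1) : a = b := by
  have hsub : (Finset.univ.filter fun c => a.1.1 c = 2)
      ⊆ (Finset.univ.filter fun c => b.1.1 c = 2) := by
    intro c hc
    simp only [Finset.mem_filter, Finset.mem_univ, true_and] at hc ⊢
    rcases h.1 c with h' | h'
    · rw [h', hc]
    · exact h'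
  have heq := Finset.eq_of_subset_of_card_le hsub (le_of_eq hs.symm)
  have hfun : b.1.1 = a.1.1 := by
    funext c
    rcases h.1 c with h' | h'
    · exact h'
    · have h2 : c ∈ (Finset.univ.filter fun d => a.1.1 d = 2) := by
        rw [heq]; simp [h']
      simp only [Finset.mem_filter] at h2
      rw [h', h2.2]
  have h22 : b.1.2 = a.1.2 := by
    have := h.2.1; have := h.2.2
    omega
  exact le_antisymm h ((le_iff b a).mpr
    ⟨fun c => Or.inl (congrFun hfun c).symm, by omega, by omega⟩)

end CR
namespace CR
variable {n : ℕ}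

instance : DecidableEq (CubeReesElt n) :=
  fun a b => decidable_of_iff (a.1 = b.1) Subtype.ext_iff.symm

/-- positions where `z` has a star but `x` doesn't -/
def Sof (x z : Fin n → Fin 3) : Finset (Fin n) :=
  Finset.univ.filter (fun c => z c = 2 ∧ x c ≠ 2)

lemma Sof_ne2 (x z : Fin n → Fin 3) : ∀ c ∈ Sof x z, x c ≠ 2 := by
  intro c hc; exact (Finset.mem_filter.mp hc).2.2

lemma mk_Sof (x z : Fin n → Fin 3) (hcoord : ∀ d, z d = x d ∨ z d = 2) :
    mk x (Sof x z) = z := by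
  funext d
  unfold mk
  by_cases hd : d ∈ Sof x z
  · rw [if_pos hd]
    exact ((Finset.mem_filter.mp hd).2.1).symm
  · rw [if_neg hd]
    simp only [Sof, Finset.mem_filter, Finset.mem_univ, true_and, not_and, not_not] at hd
    rcases hcoord d with h | h
    · exact h.symm
    · rw [h, hd h]

lemma Sof_star (x z : Fin n → Fin 3) (hcoord : ∀ d, z d = x d ∨ z d = 2) :
    starCount z = starCount x + (Sof x z).card := by
  conv_lhs => rw [← mk_Sof x z hcoord]
  exact starCount_mk x _ (Sof_ne2 x z)

lemma mk_inj (x : Fin n → Fin 3) (S T : Finset (Fin n))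
    (hS : ∀ c ∈ S, x c ≠ 2) (hT : ∀ c ∈ T, x c ≠ 2) (h : mk x S = mk x T) : S = T := by
  ext d
  constructor
  · intro hd
    have h2 : mk x T d = 2 := by rw [← h]; simp [mk, hd]
    unfold mk at h2
    split_ifs at h2 with h3
    · exact h3
    · exact absurd h2 (hS d hd)
  · intro hd
    have h2 : mk x S d = 2 := by rw [h]; simp [mk, hd]
    unfold mk at h2
    split_ifs at h2 with h3
    · exact h3
    · exact absurd h2 (hT d hd)

/-- the parametrization map into the Rees poset -/
def toCR (c : CubeReesElt n) : CubeRees n := ((c : WithTop (CubeReesElt n)) : CubeRees n)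

@[simp] lemma toCR_eq (c : CubeReesElt n) : toCR c = ((c : WithTop (CubeReesElt n)) : CubeRees n) := rfl

def g (x : Fin n → Fin 3) (p : Finset (Fin n) × ℕ) : CubeRees n :=
  if h : 1 ≤ p.2 ∧ p.2 ≤ starCount (mk x p.1) + 1 then
    toCR ⟨(mk x p.1, p.2), h⟩
  else ⊥

lemma g_spec (a : CubeReesElt n) (S : Finset (Fin n)) (l : ℕ)
    (hS : ∀ c ∈ S, a.1.1 c ≠ 2) (hl1 : a.1.2 ≤ l) (hl2 : l ≤ a.1.2 + S.card) :
    ∃ c : CubeReesElt n, g a.1.1 (S, l) = toCR c ∧ c.1.1 = mk a.1.1 S ∧ c.1.2 = l ∧ a ≤ c := by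
  have hst := starCount_mk a.1.1 S hS
  have hv : 1 ≤ l ∧ l ≤ starCount (mk a.1.1 S) + 1 := by
    have h1 := a.2.1; have h2 := a.2.2; constructor <;> omega
  refine ⟨⟨(mk a.1.1 S, l), hv⟩, ?_, rfl, rfl, ?_⟩
  · unfold g
    rw [dif_pos hv]
  · refine (le_iff _ _).mpr ⟨fun c => ?_, hl1, ?_⟩
    · show (mk a.1.1 S) c = a.1.1 c ∨ (mk a.1.1 S) c = 2
      unfold mk
      split_ifs with h
      · exact Or.inr rfl
      · exact Or.inl rfl
    · show l + starCount a.1.1 ≤ a.1.2 + starCount (mk a.1.1 S)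
      omega

end CR
namespace CR
variable {n : ℕ}

def Qb (a b : CubeReesElt n) : Finset (Finset (Fin n) × ℕ) :=
  ((Sof a.1.1 b.1.1).powerset ×ˢ Finset.Icc a.1.2 b.1.2).filter
    (fun p => p.2 ≤ a.1.2 + p.1.card ∧ b.1.2 + p.1.card ≤ p.2 + (Sof a.1.1 b.1.1).card)

lemma mem_Qb {a b : CubeReesElt n} {p : Finset (Fin n) × ℕ} :
    p ∈ Qb a b ↔ p.1 ⊆ Sof a.1.1 b.1.1 ∧ a.1.2 ≤ p.2 ∧ p.2 ≤ b.1.2 ∧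
      p.2 ≤ a.1.2 + p.1.card ∧ b.1.2 + p.1.card ≤ p.2 + (Sof a.1.1 b.1.1).card := by
  unfold Qb
  simp only [Finset.mem_filter, Finset.mem_product, Finset.mem_powerset, Finset.mem_Icc]
  tauto

/-- for `p ∈ Qb a b`, `g` produces an element of the interval `[a,b]`. -/
lemma g_Qb {a b : CubeReesElt n} (hab : a ≤ b) {p : Finset (Fin n) × ℕ} (hp : p ∈ Qb a b) :
    ∃ c : CubeReesElt n, g a.1.1 p = toCR c ∧ c.1.1 = mk a.1.1 p.1 ∧ c.1.2 = p.2 ∧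
      a ≤ c ∧ c ≤ b := by
  rw [mem_Qb] at hp
  obtain ⟨hS, h1, h2, h3, h4⟩ := hp
  have hSne : ∀ c ∈ p.1, a.1.1 c ≠ 2 := fun c hc => Sof_ne2 _ _ c (hS hc)
  obtain ⟨c, hgc, hc1, hc2, hac⟩ := g_spec a p.1 p.2 hSne h1 h3
  have hystar : starCount b.1.1 = starCount a.1.1 + (Sof a.1.1 b.1.1).card :=
    Sof_star _ _ hab.1
  have hcstar : starCount c.1.1 = starCount a.1.1 + p.1.card := by
    rw [hc1]; exact starCount_mk _ _ hSne
  refine ⟨c, hgc, hc1, hc2, hac, (le_iff _ _).mpr ⟨fun d => ?_, by omega, by omega⟩⟩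
  rw [hc1]
  unfold mk
  split_ifs with h
  · exact Or.inr ((Finset.mem_filter.mp (hS h)).2.1)
  · exact hab.1 d

lemma Icc_proper {a b : CubeReesElt n} (hab : a ≤ b) :
    Set.Icc (toCR a) (toCR b) = ↑((Qb a b).image (g a.1.1)) := by
  ext z
  simp only [Finset.coe_image, Set.mem_image, Finset.mem_coe, Set.mem_Icc]
  constructor
  · rintro ⟨haz, hzb⟩
    induction z using WithBot.recBotCoe with
    | bot => exact absurd haz (by simp [toCR])
    | coe w =>
    rw [toCR_eq, WithBot.coe_le_coe] at haz hzb
    induction w using WithTop.recTopCoe with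
    | top => exact absurd hzb (by simp)
    | coe c =>
      rw [WithTop.coe_le_coe] at haz hzb
      have hac : a ≤ c := haz
      have hcb : c ≤ b := hzb
      have hmk : mk a.1.1 (Sof a.1.1 c.1.1) = c.1.1 := mk_Sof _ _ hac.1
      have hcstar : starCount c.1.1 = starCount a.1.1 + (Sof a.1.1 c.1.1).card :=
        Sof_star _ _ hac.1
      have hbstar : starCount b.1.1 = starCount a.1.1 + (Sof a.1.1 b.1.1).card :=
        Sof_star _ _ hab.1
      have hl2 : c.1.2 ≤ a.1.2 + (Sof a.1.1 c.1.1).card := by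
        have := hac.2.2; omega
      obtain ⟨c', hg, h1', h2', _⟩ :=
        g_spec a (Sof a.1.1 c.1.1) c.1.2 (Sof_ne2 _ _) hac.2.1 hl2
      have hcc : c' = c := Subtype.ext (Prod.ext (h1'.trans hmk) h2')
      refine ⟨(Sof a.1.1 c.1.1, c.1.2), ?_, ?_⟩
      · rw [mem_Qb]
        refine ⟨fun d hd => ?_, hac.2.1, hcb.2.1, hl2, by
          show b.1.2 + (Sof a.1.1 c.1.1).card ≤ c.1.2 + (Sof a.1.1 b.1.1).card
          have h5 := hcb.2.2
          omega⟩
        simp only [Sof, Finset.mem_filter, Finset.mem_univ, true_and] at hd ⊢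
        rcases hcb.1 d with h | h
        · exact ⟨h.trans hd.1, hd.2⟩
        · exact ⟨h, hd.2⟩
      · rw [hg, hcc]; rfl
  · rintro ⟨p, hp, rfl⟩
    obtain ⟨c, hgc, _, _, hac, hcb⟩ := g_Qb hab hp
    rw [hgc]
    constructor
    · rw [toCR_eq, toCR_eq, WithBot.coe_le_coe, WithTop.coe_le_coe]; exact hac
    · rw [toCR_eq, toCR_eq, WithBot.coe_le_coe, WithTop.coe_le_coe]; exact hcb

end CR
namespace CR
variable {n : ℕ}

lemma toCR_inj {c d : CubeReesElt n} (h : toCR c = toCR d) : c = d := by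
  rw [toCR_eq, toCR_eq, WithBot.coe_inj, WithTop.coe_inj] at h
  exact h

lemma g_injOn (a b : CubeReesElt n) (hab : a ≤ b) : Set.InjOn (g a.1.1) (Qb a b) := by
  intro p hp q hq h
  obtain ⟨cp, hgp, hp1, hp2, _, _⟩ := g_Qb hab hp
  obtain ⟨cq, hgq, hq1, hq2, _, _⟩ := g_Qb hab hq
  rw [hgp, hgq] at h
  have hc := toCR_inj h
  have hmk : mk a.1.1 p.1 = mk a.1.1 q.1 := by rw [← hp1, ← hq1, hc]
  have hS1 : ∀ c ∈ p.1, a.1.1 c ≠ 2 := fun c hc' =>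
    Sof_ne2 _ _ c ((mem_Qb.mp hp).1 hc')
  have hS2 : ∀ c ∈ q.1, a.1.1 c ≠ 2 := fun c hc' =>
    Sof_ne2 _ _ c ((mem_Qb.mp hq).1 hc')
  exact Prod.ext (mk_inj _ _ _ hS1 hS2 hmk) (by rw [← hp2, ← hq2, hc])

def D0 (x : Fin n → Fin 3) : Finset (Fin n) := Finset.univ.filter (fun c => x c ≠ 2)

lemma D0_ne2 (x : Fin n → Fin 3) : ∀ c ∈ D0 x, x c ≠ 2 := by
  intro c hc; exact (Finset.mem_filter.mp hc).2

def Qtop (a : CubeReesElt n) : Finset (Finset (Fin n) × ℕ) :=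
  ((D0 a.1.1).powerset ×ˢ Finset.Icc a.1.2 (a.1.2 + (D0 a.1.1).card)).filter
    (fun p => p.2 ≤ a.1.2 + p.1.card)

lemma mem_Qtop {a : CubeReesElt n} {p : Finset (Fin n) × ℕ} :
    p ∈ Qtop a ↔ p.1 ⊆ D0 a.1.1 ∧ a.1.2 ≤ p.2 ∧ p.2 ≤ a.1.2 + p.1.card := by
  unfold Qtop
  simp only [Finset.mem_filter, Finset.mem_product, Finset.mem_powerset, Finset.mem_Icc]
  constructor
  · rintro ⟨⟨h1, h2, _⟩, h4⟩; exact ⟨h1, h2, h4⟩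
  · rintro ⟨h1, h2, h3⟩
    have := Finset.card_le_card h1
    exact ⟨⟨h1, h2, by omega⟩, h3⟩

lemma g_Qtop {a : CubeReesElt n} {p : Finset (Fin n) × ℕ} (hp : p ∈ Qtop a) :
    ∃ c : CubeReesElt n, g a.1.1 p = toCR c ∧ c.1.1 = mk a.1.1 p.1 ∧ c.1.2 = p.2 ∧ a ≤ c := by
  rw [mem_Qtop] at hp
  exact g_spec a p.1 p.2 (fun c hc => D0_ne2 _ c (hp.1 hc)) hp.2.1 hp.2.2

lemma g_injOn_top (a : CubeReesElt n) : Set.InjOn (g a.1.1) (Qtop a) := by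
  intro p hp q hq h
  obtain ⟨cp, hgp, hp1, hp2, _⟩ := g_Qtop hp
  obtain ⟨cq, hgq, hq1, hq2, _⟩ := g_Qtop hq
  rw [hgp, hgq] at h
  have hc := toCR_inj h
  have hmk : mk a.1.1 p.1 = mk a.1.1 q.1 := by rw [← hp1, ← hq1, hc]
  exact Prod.ext (mk_inj _ _ _
    (fun c hc' => D0_ne2 _ c ((mem_Qtop.mp hp).1 hc'))
    (fun c hc' => D0_ne2 _ c ((mem_Qtop.mp hq).1 hc')) hmk) (by rw [← hp2, ← hq2, hc])

lemma top_notmem_image (a : CubeReesElt n) (Q : Finset (Finset (Fin n) × ℕ)) :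
    (⊤ : CubeRees n) ∉ Q.image (g a.1.1) := by
  rw [Finset.mem_image]
  rintro ⟨p, _, hp⟩
  unfold g at hp
  split_ifs at hp with h
  · unfold toCR at hp
    have : ((⊤ : WithTop (CubeReesElt n)) : CubeRees n) = (⊤ : CubeRees n) := rfl
    rw [← this, WithBot.coe_inj] at hp
    exact WithTop.coe_ne_top hp
  · have : ((⊤ : WithTop (CubeReesElt n)) : CubeRees n) = (⊤ : CubeRees n) := rfl
    rw [← this] at hp
    exact (by simp : (⊥ : CubeRees n) ≠ _) hp

lemma Icc_top (a : CubeReesElt n) :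
    Set.Icc (toCR a) (⊤ : CubeRees n) = ↑(insert ⊤ ((Qtop a).image (g a.1.1))) := by
  ext z
  simp only [Finset.coe_insert, Set.mem_insert_iff, Finset.coe_image, Set.mem_image,
    Finset.mem_coe, Set.mem_Icc]
  constructor
  · rintro ⟨haz, -⟩
    induction z using WithBot.recBotCoe with
    | bot => exact absurd haz (by simp [toCR])
    | coe w =>
    rw [toCR_eq, WithBot.coe_le_coe] at haz
    induction w using WithTop.recTopCoe with
    | top => exact Or.inl rfl
    | coe c =>
      rw [WithTop.coe_le_coe] at haz
      have hac : a ≤ c := haz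
      right
      have hmk : mk a.1.1 (Sof a.1.1 c.1.1) = c.1.1 := mk_Sof _ _ hac.1
      have hcstar : starCount c.1.1 = starCount a.1.1 + (Sof a.1.1 c.1.1).card :=
        Sof_star _ _ hac.1
      have hl2 : c.1.2 ≤ a.1.2 + (Sof a.1.1 c.1.1).card := by
        have := hac.2.2; omega
      obtain ⟨c', hg, h1', h2', _⟩ :=
        g_spec a (Sof a.1.1 c.1.1) c.1.2 (Sof_ne2 _ _) hac.2.1 hl2
      have hcc : c' = c := Subtype.ext (Prod.ext (h1'.trans hmk) h2')
      refine ⟨(Sof a.1.1 c.1.1, c.1.2), ?_, ?_⟩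
      · rw [mem_Qtop]
        refine ⟨fun d hd => ?_, hac.2.1, hl2⟩
        simp only [Sof, D0, Finset.mem_filter, Finset.mem_univ, true_and] at hd ⊢
        exact hd.2
      · rw [hg, hcc]; rfl
  · rintro (rfl | ⟨p, hp, rfl⟩)
    · exact ⟨le_top, le_rfl⟩
    · obtain ⟨c, hgc, _, _, hac⟩ := g_Qtop hp
      rw [hgc]
      exact ⟨by rw [toCR_eq, toCR_eq, WithBot.coe_le_coe, WithTop.coe_le_coe]; exact hac, le_top⟩

end CR
namespace CR
variable {n : ℕ}

lemma sum_shift (i t : ℕ) : ∑ l ∈ Finset.Icc i (i + t), M t (l - i) = fM t := by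
  rw [← Finset.Ico_add_one_right_eq_Icc, Finset.sum_Ico_eq_sum_range]
  have h : i + t + 1 - i = t + 1 := by omega
  rw [h, fM]
  exact Finset.sum_congr rfl fun d _ => by rw [Nat.add_sub_cancel_left]

lemma sum_Qtop (a : CubeReesElt n) :
    ∑ p ∈ Qtop a, M p.1.card (p.2 - a.1.2)
      = ∑ t ∈ Finset.range ((D0 a.1.1).card + 1), ((D0 a.1.1).card.choose t : ℤ) * fM t := by
  unfold Qtop
  rw [Finset.sum_filter, Finset.sum_product]
  have step : ∀ S ∈ (D0 a.1.1).powerset,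
      (∑ l ∈ Finset.Icc a.1.2 (a.1.2 + (D0 a.1.1).card),
        if l ≤ a.1.2 + S.card then M S.card (l - a.1.2) else 0) = fM S.card := by
    intro S hS
    have hcard : S.card ≤ (D0 a.1.1).card :=
      Finset.card_le_card (Finset.mem_powerset.mp hS)
    rw [← Finset.sum_filter]
    have hfe : (Finset.Icc a.1.2 (a.1.2 + (D0 a.1.1).card)).filter
        (fun l => l ≤ a.1.2 + S.card) = Finset.Icc a.1.2 (a.1.2 + S.card) := by
      ext l
      simp only [Finset.mem_filter, Finset.mem_Icc]
      omega
    rw [hfe, sum_shift]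
  rw [Finset.sum_congr rfl step, Finset.sum_powerset_apply_card fM]
  exact Finset.sum_congr rfl fun t _ => by rw [nsmul_eq_mul]

lemma sum_Qb (a b : CubeReesElt n) (hab : a ≤ b) :
    ∑ p ∈ Qb a b, M p.1.card (p.2 - a.1.2)
      = ∑ t ∈ Finset.range ((Sof a.1.1 b.1.1).card + 1),
          ((Sof a.1.1 b.1.1).card.choose t : ℤ) *
          ∑ e ∈ Finset.Icc ((b.1.2 - a.1.2) - ((Sof a.1.1 b.1.1).card - t))
              (min (b.1.2 - a.1.2) t), M t e := by
  set m := (Sof a.1.1 b.1.1).card with hm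
  set i := a.1.2
  set j := b.1.2
  set d := j - i with hd
  have hij : i ≤ j := hab.2.1
  unfold Qb
  rw [Finset.sum_filter, Finset.sum_product]
  have step : ∀ S ∈ (Sof a.1.1 b.1.1).powerset,
      (∑ l ∈ Finset.Icc i j,
        if l ≤ i + S.card ∧ j + S.card ≤ l + m then M S.card (l - i) else 0)
      = ∑ e ∈ Finset.Icc (d - (m - S.card)) (min d S.card), M S.card e := by
    intro S hS
    have hcard : S.card ≤ m := Finset.card_le_card (Finset.mem_powerset.mp hS)
    rw [← Finset.sum_filter]
    refine Finset.sum_nbij' (fun l => l - i) (fun e => e + i) ?_ ?_ ?_ ?_ ?_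
    · intro l hl
      simp only [Finset.mem_filter, Finset.mem_Icc] at hl ⊢
      omega
    · intro e he
      simp only [Finset.mem_filter, Finset.mem_Icc] at he ⊢
      omega
    · intro l hl
      simp only [Finset.mem_filter, Finset.mem_Icc] at hl
      show l - i + i = l
      omega
    · intro e he
      simp only [Finset.mem_Icc] at he
      show e + i - i = e
      omega
    · intro l _
      rfl
  rw [Finset.sum_congr rfl step,
    Finset.sum_powerset_apply_card
      (fun t => ∑ e ∈ Finset.Icc (d - (m - t)) (min d t), M t e)]
  exact Finset.sum_congr rfl fun t _ => by rw [nsmul_eq_mul]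

end CR
namespace CR
variable {n : ℕ}

lemma mu_proper (a : CubeReesElt n) (mu : CubeRees n → CubeRees n → ℤ)
    (hmu_refl : ∀ x, mu x x = 1)
    (hmu_rec : ∀ x y : CubeRees n, x < y → ∑ᶠ z ∈ Set.Icc x y, mu x z = 0) :
    ∀ (b : CubeReesElt n), a ≤ b →
      mu (toCR a) (toCR b) = M (starCount b.1.1 - starCount a.1.1) (b.1.2 - a.1.2) := by
  suffices H : ∀ N (b : CubeReesElt n), starCount b.1.1 = N → a ≤ b →
      mu (toCR a) (toCR b) = M (starCount b.1.1 - starCount a.1.1) (b.1.2 - a.1.2) from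
    fun b hab => H _ b rfl hab
  intro N
  induction N using Nat.strong_induction_on with
  | _ N ih =>
  intro b hN hab
  rcases eq_or_lt_of_le hab with heq | hlt
  · rw [← heq, hmu_refl, Nat.sub_self, Nat.sub_self, M_zero]
  · have hne : a ≠ b := ne_of_lt hlt
    have hsstrict : starCount a.1.1 < starCount b.1.1 := by
      rcases lt_or_eq_of_le (star_le hab) with h | h
      · exact h
      · exact absurd (eq_of_le_of_star_eq hab h) hne
    have hbstar : starCount b.1.1 = starCount a.1.1 + (Sof a.1.1 b.1.1).card :=
      Sof_star _ _ hab.1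
    have hab' : toCR a < toCR b := by
      rw [toCR_eq, toCR_eq, WithBot.coe_lt_coe, WithTop.coe_lt_coe]
      exact hlt
    have h0 := hmu_rec _ _ hab'
    rw [Icc_proper hab, finsum_mem_coe_finset,
      Finset.sum_image (fun p hp q hq h => g_injOn a b hab hp hq h)] at h0
    set pb : Finset (Fin n) × ℕ := (Sof a.1.1 b.1.1, b.1.2) with hpbdef
    have hpb : pb ∈ Qb a b := by
      rw [mem_Qb]
      refine ⟨subset_rfl, hab.2.1, le_rfl, ?_, le_rfl⟩
      show b.1.2 ≤ a.1.2 + (Sof a.1.1 b.1.1).card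
      have := hab.2.2
      omega
    have hgpb : g a.1.1 pb = toCR b := by
      obtain ⟨c, hg, hc1, hc2, _, _⟩ := g_Qb hab hpb
      have hcb : c = b := Subtype.ext (Prod.ext (hc1.trans (mk_Sof _ _ hab.1)) hc2)
      rw [hg, hcb]
    have herase : ∀ p ∈ (Qb a b).erase pb,
        mu (toCR a) (g a.1.1 p) = M p.1.card (p.2 - a.1.2) := by
      intro p hp
      have hpQ := Finset.mem_of_mem_erase hp
      obtain ⟨c, hg, hc1, hc2, hac, hcb⟩ := g_Qb hab hpQ
      have hSne : ∀ d ∈ p.1, a.1.1 d ≠ 2 := fun d hd =>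
        Sof_ne2 _ _ d ((mem_Qb.mp hpQ).1 hd)
      have hcstar : starCount c.1.1 = starCount a.1.1 + p.1.card := by
        rw [hc1]; exact starCount_mk _ _ hSne
      have hcne : c ≠ b := by
        rintro rfl
        apply Finset.ne_of_mem_erase hp
        have h1 : p.1 = Sof a.1.1 c.1.1 := by
          apply mk_inj a.1.1 _ _ hSne (Sof_ne2 _ _)
          rw [← hc1, mk_Sof _ _ hac.1]
        rw [hpbdef]
        exact Prod.ext (by rw [h1]) hc2.symm
      have hlt2 : starCount c.1.1 < N := by
        rw [← hN]
        rcases lt_or_eq_of_le (star_le hcb) with h | h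
        · exact h
        · exact absurd (eq_of_le_of_star_eq hcb h) hcne
      rw [hg, ih _ hlt2 c rfl hac, hcstar, hc2]
      congr 1
      omega
    have hzero : ∑ p ∈ Qb a b, M p.1.card (p.2 - a.1.2) = 0 := by
      rw [sum_Qb a b hab]
      exact sum_G _ _ (by omega) (by have := hab.2.2; omega)
    rw [← Finset.add_sum_erase _ _ hpb, Finset.sum_congr rfl herase, hgpb] at h0
    have hsplit : M pb.1.card (pb.2 - a.1.2)
        + ∑ p ∈ (Qb a b).erase pb, M p.1.card (p.2 - a.1.2) = 0 :=
      (Finset.add_sum_erase _ (fun p => M p.1.card (p.2 - a.1.2)) hpb).trans hzero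
    have hfin : mu (toCR a) (toCR b) = M pb.1.card (pb.2 - a.1.2) := by linarith
    rw [hfin]
    show M (Sof a.1.1 b.1.1).card (b.1.2 - a.1.2)
      = M (starCount b.1.1 - starCount a.1.1) (b.1.2 - a.1.2)
    congr 1
    omega

end CR
theorem statement10 (n : ℕ) (a : CubeReesElt n) (k : ℕ)
    (hk : k = n + 1 - starCount a.1.1)
    (mu : CubeRees n → CubeRees n → ℤ)
    (hmu_refl : ∀ x, mu x x = 1)
    (hmu_rec : ∀ x y : CubeRees n, x < y → ∑ᶠ z ∈ Set.Icc x y, mu x z = 0) :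
    mu ((a : WithTop (CubeReesElt n)) : CubeRees n) ⊤ =
      (-1) ^ k * ((k - 1).factorial : ℤ) := by
  have hstar_le : starCount a.1.1 ≤ n := by
    unfold starCount
    calc (Finset.univ.filter fun c => a.1.1 c = 2).card
        ≤ Finset.univ.card := Finset.card_filter_le _ _
      _ = n := by rw [Finset.card_univ, Fintype.card_fin]
  have hD0card : (CR.D0 a.1.1).card = n - starCount a.1.1 := by
    unfold CR.D0 starCount
    rw [Finset.filter_not, Finset.card_sdiff_of_subset (Finset.filter_subset _ _),
      Finset.card_univ, Fintype.card_fin]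
  have htop : (⊤ : CubeRees n) = ((⊤ : WithTop (CubeReesElt n)) : CubeRees n) := rfl
  have hlt : CR.toCR a < (⊤ : CubeRees n) := by
    rw [CR.toCR_eq, htop, WithBot.coe_lt_coe]
    exact WithTop.coe_lt_top a
  have h0 := hmu_rec _ _ hlt
  rw [CR.Icc_top a, finsum_mem_coe_finset,
    Finset.sum_insert (CR.top_notmem_image a _),
    Finset.sum_image (fun p hp q hq h => CR.g_injOn_top a hp hq h)] at h0
  have hcongr : ∀ p ∈ CR.Qtop a,
      mu (CR.toCR a) (CR.g a.1.1 p) = M p.1.card (p.2 - a.1.2) := by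
    intro p hp
    obtain ⟨c, hg, hc1, hc2, hac⟩ := CR.g_Qtop hp
    have hSne : ∀ d ∈ p.1, a.1.1 d ≠ 2 := fun d hd =>
      CR.D0_ne2 _ d ((CR.mem_Qtop.mp hp).1 hd)
    have hcstar : starCount c.1.1 = starCount a.1.1 + p.1.card := by
      rw [hc1]; exact CR.starCount_mk _ _ hSne
    rw [hg, CR.mu_proper a mu hmu_refl hmu_rec c hac, hcstar, hc2]
    congr 1
    omega
  rw [Finset.sum_congr rfl hcongr, CR.sum_Qtop a, fM_sum] at h0
  -- h0 : mu (toCR a) ⊤ + (-1)^K * K! = 0 with K = (D0 a.1.1).card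
  have hk1 : k = (CR.D0 a.1.1).card + 1 := by omega
  show mu (CR.toCR a) ⊤ = (-1) ^ k * ((k - 1).factorial : ℤ)
  rw [hk1]
  have hsimp : (CR.D0 a.1.1).card + 1 - 1 = (CR.D0 a.1.1).card := by omega
  rw [hsimp, pow_succ]
  linarith
end

section
/- For every n ≥ 1, the Möbius function of the Rees product of the cubical lattice with the chain satisfies μ(Rees(𝒞_n, C_{n+1})) = −1 + Σ_{i=0}^{n} (−1)^{n−i} · 2^{n−i} · C(n,i) · (i+1) · (n−i)!. -/
instance (n : ℕ) : DecidableEq (CubeReesElt n) := by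
  unfold CubeReesElt; infer_instance

lemma starCount_le {n : ℕ} (x : Fin n → Fin 3) : starCount x ≤ n := by
  classical
  calc (Finset.univ.filter fun a => x a = 2).card ≤ (Finset.univ : Finset (Fin n)).card :=
        Finset.card_filter_le _ _
    _ = n := by simp

noncomputable instance (n : ℕ) : Fintype (CubeReesElt n) := by
  apply Fintype.ofInjective (β := (Fin n → Fin 3) × Fin (n+2))
    (fun z => (z.1.1, ⟨z.1.2, by have := z.2.2; have := starCount_le z.1.1; omega⟩))
  intro a b h
  simp only [Prod.mk.injEq, Fin.mk.injEq] at h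
  exact Subtype.ext (Prod.ext h.1 h.2)

instance (n : ℕ) : DecidableRel (α := CubeReesElt n) (· ≤ ·) := fun a b =>
  decidable_of_iff ((∀ c, b.1.1 c = a.1.1 c ∨ b.1.1 c = 2) ∧ a.1.2 ≤ b.1.2 ∧
    b.1.2 + starCount a.1.1 ≤ a.1.2 + starCount b.1.1) Iff.rfl

noncomputable instance (n : ℕ) : Fintype (CubeRees n) := by
  have : Fintype (WithTop (CubeReesElt n)) := show Fintype (Option _) from inferInstance
  exact show Fintype (Option _) from inferInstance

def muF (s i : ℕ) : ℤ :=
  -1 - ∑ t ∈ (Finset.range s).attach,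
      ((s.choose t * 2 ^ (s - ↑t) : ℕ) : ℤ) *
        ∑ j ∈ Finset.Icc (max 1 (i + ↑t - s)) (min i (↑t + 1)), muF ↑t j
termination_by s
decreasing_by exact Finset.mem_range.mp t.2

lemma muF_def (s i : ℕ) : muF s i =
    -1 - ∑ t ∈ (Finset.range s).attach,
      ((s.choose t * 2 ^ (s - ↑t) : ℕ) : ℤ) *
        ∑ j ∈ Finset.Icc (max 1 (i + ↑t - s)) (min i (↑t + 1)), muF ↑t j := by
  rw [muF]

open Finset

lemma sum_fun_count (s : ℕ) (H : ℕ → ℤ) :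
    ∑ g : Fin s → Fin 3, H (∑ a, if g a = 2 then 1 else 0) =
      ∑ t ∈ range (s + 1), ((s.choose t * 2 ^ (s - t) : ℕ) : ℤ) * H t := by
  induction s generalizing H with
  | zero => simp
  | succ s ih =>
    obtain ⟨e, he⟩ : ∃ e', e' = (Fin.consEquiv (fun _ : Fin (s+1) => Fin 3)) := ⟨_, rfl⟩
    rw [← Equiv.sum_comp e (fun g => H (∑ a, if g a = 2 then 1 else 0))]
    rw [Fintype.sum_prod_type]
    have key : ∀ (a : Fin 3) (h : Fin s → Fin 3),
        (∑ b, if (e (a, h)) b = 2 then (1:ℕ) else 0) =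
          (if a = 2 then 1 else 0) + ∑ b, if h b = 2 then 1 else 0 := by
      intro a h
      rw [Fin.sum_univ_succ, he]
      simp only [Fin.consEquiv, Equiv.coe_fn_mk, Fin.cons_zero, Fin.cons_succ]
    have expand : ∀ a : Fin 3, (∑ h : Fin s → Fin 3, H (∑ b, if (e (a, h)) b = 2 then 1 else 0))
        = ∑ t ∈ range (s + 1), ((s.choose t * 2 ^ (s - t) : ℕ) : ℤ) * H ((if a = 2 then 1 else 0) + t) := by
      intro a
      rw [Finset.sum_congr rfl (fun h _ => by rw [key])]
      exact ih (fun m => H ((if a = 2 then 1 else 0) + m))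
    rw [Fin.sum_univ_three]
    rw [expand, expand, expand]
    simp only [if_neg (show ¬(0:Fin 3) = 2 by decide), if_neg (show ¬(1:Fin 3) = 2 by decide),
      if_pos (show (2:Fin 3) = 2 from rfl), if_true, eq_self_iff_true, zero_add]
    have e1 : ∑ t ∈ range (s+1+1), (((s+1).choose t * 2 ^ (s+1 - t) : ℕ) : ℤ) * H t
        = ∑ t ∈ range (s+1), (((s+1).choose (t+1) * 2 ^ (s+1 - (t+1)) : ℕ) : ℤ) * H (t+1)
          + (((s+1).choose 0 * 2 ^ (s+1-0) : ℕ) : ℤ) * H 0 :=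
      Finset.sum_range_succ' _ _
    have e2 : ∑ t ∈ range (s+1), ((s.choose t * 2 ^ (s - t) : ℕ) : ℤ) * H t
        = ∑ t ∈ range s, ((s.choose (t+1) * 2 ^ (s - (t+1)) : ℕ) : ℤ) * H (t+1)
          + ((s.choose 0 * 2 ^ (s-0) : ℕ) : ℤ) * H 0 := Finset.sum_range_succ' _ _
    have e4 : ∑ t ∈ range (s+1), (((s+1).choose (t+1) * 2 ^ (s+1 - (t+1)) : ℕ) : ℤ) * H (t+1)
        = ∑ t ∈ range (s+1), ((s.choose t * 2 ^ (s - t) : ℕ) : ℤ) * H (t+1)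
          + ∑ t ∈ range (s+1), ((s.choose (t+1) * 2 ^ (s - t) : ℕ) : ℤ) * H (t+1) := by
      rw [← Finset.sum_add_distrib]
      refine Finset.sum_congr rfl fun t _ => ?_
      rw [Nat.choose_succ_succ, show s + 1 - (t+1) = s - t from by omega]
      push_cast
      ring
    have e5 : ∑ t ∈ range (s+1), ((s.choose (t+1) * 2 ^ (s - t) : ℕ) : ℤ) * H (t+1)
        = 2 * ∑ t ∈ range s, ((s.choose (t+1) * 2 ^ (s - (t+1)) : ℕ) : ℤ) * H (t+1) := by
      rw [Finset.sum_range_succ, Nat.choose_succ_self]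
      simp only [zero_mul, Nat.cast_zero, add_zero]
      rw [Finset.mul_sum]
      refine Finset.sum_congr rfl fun t ht => ?_
      have h1 : t < s := Finset.mem_range.mp ht
      rw [show s - t = (s - (t+1)) + 1 from by omega]
      push_cast
      ring
    have e8 : ∑ t ∈ range (s+1), ((s.choose t * 2 ^ (s - t) : ℕ) : ℤ) * H (1 + t)
        = ∑ t ∈ range (s+1), ((s.choose t * 2 ^ (s - t) : ℕ) : ℤ) * H (t+1) := by
      refine Finset.sum_congr rfl fun t _ => by rw [add_comm 1 t]
    have e7 : (((s+1).choose 0 * 2 ^ (s+1-0) : ℕ) : ℤ) = 2 * ((s.choose 0 * 2 ^ (s-0) : ℕ) : ℤ) := by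
      simp only [Nat.choose_zero_right, Nat.sub_zero, one_mul]
      push_cast
      rw [pow_succ]
      ring
    rw [e1, e4, e5, e7, e8, e2]
    ring

lemma starCount_eq_subtype_sum {n : ℕ} (x y : Fin n → Fin 3)
    (hy : ∀ c, x c = y c ∨ x c = 2) :
    starCount y = ∑ a : {c : Fin n // x c = 2}, (if y a.1 = 2 then 1 else 0) := by
  rw [starCount, Finset.card_filter]
  rw [← Finset.sum_filter_add_sum_filter_not Finset.univ (fun c => x c = 2)
    (fun c => if y c = 2 then (1:ℕ) else 0)]
  have h2 : ∑ c ∈ Finset.univ.filter (fun c => ¬ x c = 2), (if y c = 2 then (1:ℕ) else 0) = 0 := by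
    refine Finset.sum_eq_zero fun c hc => ?_
    have hc' : ¬ x c = 2 := (Finset.mem_filter.mp hc).2
    rcases hy c with h | h
    · rw [if_neg]; rw [← h]; exact hc'
    · exact absurd h hc'
  rw [h2, add_zero]
  exact Finset.sum_subtype _ (by simp) _

lemma bridge {n : ℕ} (x : Fin n → Fin 3) (H : ℕ → ℤ) :
    ∑ y ∈ Finset.univ.filter (fun y => ∀ c, x c = y c ∨ x c = 2), H (starCount y)
      = ∑ t ∈ range (starCount x + 1),
          (((starCount x).choose t * 2 ^ (starCount x - t) : ℕ) : ℤ) * H t := by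
  classical
  have step1 : ∑ y ∈ Finset.univ.filter (fun y => ∀ c, x c = y c ∨ x c = 2), H (starCount y)
      = ∑ g : {c : Fin n // x c = 2} → Fin 3, H (∑ a, if g a = 2 then 1 else 0) := by
    refine Finset.sum_nbij' (fun y => fun a => y a.1)
      (fun g => fun c => if h : x c = 2 then g ⟨c, h⟩ else x c) ?_ ?_ ?_ ?_ ?_
    · intro y _; exact Finset.mem_univ _
    · intro g _
      refine Finset.mem_filter.mpr ⟨Finset.mem_univ _, fun c => ?_⟩
      by_cases h : x c = 2
      · exact Or.inr h
      · left; show x c = dite _ _ _; rw [dif_neg h]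
    · intro y hy
      have hcube := (Finset.mem_filter.mp hy).2
      funext c
      show dite _ _ _ = y c
      by_cases h : x c = 2
      · rw [dif_pos h]
      · rw [dif_neg h]
        rcases hcube c with h' | h'
        · exact h'
        · exact absurd h' h
    · intro g _
      funext a
      show dite _ _ _ = g a
      rw [dif_pos a.2]
    · intro y hy
      exact congrArg H (starCount_eq_subtype_sum x y (Finset.mem_filter.mp hy).2)
  rw [step1]
  have hcard : Fintype.card {c : Fin n // x c = 2} = starCount x := by
    rw [Fintype.card_subtype]; rfl
  obtain ⟨e, -⟩ : ∃ e' : {c : Fin n // x c = 2} ≃ Fin (starCount x), e' = e' :=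
    ⟨Fintype.equivFinOfCardEq hcard, rfl⟩
  rw [← sum_fun_count]
  rw [← Equiv.sum_comp (Equiv.arrowCongr e.symm (Equiv.refl (Fin 3)))
    (fun g => H (∑ a, if g a = 2 then 1 else 0))]
  refine Finset.sum_congr rfl fun g' _ => ?_
  congr 1
  rw [← Equiv.sum_comp e (fun b => if g' b = 2 then (1:ℕ) else 0)]
  refine Finset.sum_congr rfl fun a _ => ?_
  simp [Equiv.arrowCongr]

lemma sumgen {n : ℕ} (x : Fin n → Fin 3) (K : ℕ → Finset ℕ)
    (hK : ∀ t, ∀ j ∈ K t, 1 ≤ j ∧ j ≤ t + 1) :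
    ∑ w ∈ Finset.univ.filter (fun w : CubeReesElt n =>
        (∀ c, x c = w.1.1 c ∨ x c = 2) ∧ w.1.2 ∈ K (starCount w.1.1)),
      muF (starCount w.1.1) w.1.2
    = ∑ t ∈ range (starCount x + 1),
        (((starCount x).choose t * 2 ^ (starCount x - t) : ℕ) : ℤ) * ∑ j ∈ K t, muF t j := by
  classical
  have step1 : ∑ w ∈ Finset.univ.filter (fun w : CubeReesElt n =>
        (∀ c, x c = w.1.1 c ∨ x c = 2) ∧ w.1.2 ∈ K (starCount w.1.1)),
      muF (starCount w.1.1) w.1.2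
      = ∑ p ∈ (Finset.univ.filter
            (fun y : Fin n → Fin 3 => ∀ c, x c = y c ∨ x c = 2)).sigma
            (fun y => K (starCount y)),
          muF (starCount p.1) p.2 := by
    refine Finset.sum_nbij' (fun w => ⟨w.1.1, w.1.2⟩)
      (fun p => if h : 1 ≤ p.2 ∧ p.2 ≤ starCount p.1 + 1 then ⟨(p.1, p.2), h⟩
        else ⟨(p.1, 1), ⟨le_refl 1, by omega⟩⟩) ?_ ?_ ?_ ?_ ?_
    · intro w hw
      obtain ⟨-, h1, h2⟩ := Finset.mem_filter.mp hw
      exact Finset.mem_sigma.mpr ⟨Finset.mem_filter.mpr ⟨Finset.mem_univ _, h1⟩, h2⟩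
    · intro p hp
      obtain ⟨hy, hj⟩ := Finset.mem_sigma.mp hp
      have hcube := (Finset.mem_filter.mp hy).2
      have hb := hK _ _ hj
      have e : (if h : 1 ≤ p.2 ∧ p.2 ≤ starCount p.1 + 1 then
          (⟨(p.1, p.2), h⟩ : {xi : (Fin n → Fin 3) × ℕ // 1 ≤ xi.2 ∧ xi.2 ≤ starCount xi.1 + 1})
          else ⟨(p.1, 1), ⟨le_refl 1, by omega⟩⟩) = ⟨(p.1, p.2), hb⟩ := dif_pos hb
      exact (congrArg (fun w : CubeReesElt n => w ∈ Finset.univ.filter (fun w : CubeReesElt n =>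
        (∀ c, x c = w.1.1 c ∨ x c = 2) ∧ w.1.2 ∈ K (starCount w.1.1))) e).mpr
        (Finset.mem_filter.mpr ⟨Finset.mem_univ _, hcube, hj⟩)
    · intro w hw
      exact (dif_pos w.2).trans (Subtype.ext rfl)
    · intro p hp
      obtain ⟨hy, hj⟩ := Finset.mem_sigma.mp hp
      have hb := hK _ _ hj
      have e : (if h : 1 ≤ p.2 ∧ p.2 ≤ starCount p.1 + 1 then
          (⟨(p.1, p.2), h⟩ : {xi : (Fin n → Fin 3) × ℕ // 1 ≤ xi.2 ∧ xi.2 ≤ starCount xi.1 + 1})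
          else ⟨(p.1, 1), ⟨le_refl 1, by omega⟩⟩) = ⟨(p.1, p.2), hb⟩ := dif_pos hb
      exact congrArg (fun w : CubeReesElt n => (⟨w.1.1, w.1.2⟩ : Σ _ : Fin n → Fin 3, ℕ)) e
    · intro w hw
      rfl
  have step2 : ∑ y ∈ Finset.univ.filter
        (fun y : Fin n → Fin 3 => ∀ c, x c = y c ∨ x c = 2),
        ∑ j ∈ K (starCount y), muF (starCount y) j
      = ∑ p ∈ (Finset.univ.filter
            (fun y : Fin n → Fin 3 => ∀ c, x c = y c ∨ x c = 2)).sigma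
            (fun y => K (starCount y)),
          muF (starCount p.1) p.2 :=
    Finset.sum_sigma' _ _ (fun y j => muF (starCount y) j)
  rw [step1, ← step2]
  exact bridge x (fun t => ∑ j ∈ K t, muF t j)

noncomputable def Gm : ℕ → ℤ := fun t => ∑ j ∈ Finset.Icc 1 (t+1), muF t j

def Uu : ℕ → ℤ := fun m => ∑ k ∈ range (m+1),
  (-1:ℤ)^(m-k) * 2^(m-k) * (m.choose k : ℤ) * (k+1 : ℤ) * ((m-k).factorial : ℤ)

def Gh : ℕ → ℤ := fun s => ∑ u ∈ range (s+1), (s.choose u : ℤ) * (-2)^(s-u) * (-(Uu u))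

-- Claim 1 : recursion for Gm
lemma Gm_rec (s : ℕ) :
    ∑ t ∈ range (s+1), ((s.choose t * 2 ^ (s-t) : ℕ) : ℤ) * (((s - t + 1 : ℕ) : ℤ) * Gm t)
      = -(s+1 : ℤ) := by
  have hGs : Gm s = -(s+1 : ℤ)
      - ∑ t ∈ range s, ((s.choose t * 2 ^ (s-t) : ℕ) : ℤ) * (((s - t + 1 : ℕ) : ℤ) * Gm t) := by
    have h1 : Gm s = ∑ i ∈ Finset.Icc 1 (s+1),
        (-1 - ∑ t ∈ (range s).attach, ((s.choose t * 2 ^ (s - ↑t) : ℕ) : ℤ) *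
          ∑ j ∈ Finset.Icc (max 1 (i + ↑t - s)) (min i (↑t + 1)), muF ↑t j) :=
      Finset.sum_congr rfl fun i _ => muF_def s i
    rw [h1, Finset.sum_sub_distrib]
    have hcard : ∑ _i ∈ Finset.Icc 1 (s+1), (-1 : ℤ) = -(s+1 : ℤ) := by
      rw [Finset.sum_const, Nat.card_Icc]
      simp
    rw [hcard]
    congr 1
    rw [Finset.sum_comm]
    rw [← Finset.sum_attach (range s) (fun t => ((s.choose t * 2 ^ (s-t) : ℕ) : ℤ) *
      (((s - t + 1 : ℕ) : ℤ) * Gm t))]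
    refine Finset.sum_congr rfl fun t _ => ?_
    obtain ⟨tv, htv⟩ := t
    have ht : tv < s := Finset.mem_range.mp htv
    simp only
    rw [← Finset.mul_sum]
    congr 1
    -- ∑ i ∈ Icc 1 (s+1), ∑ j ∈ Icc (max 1 (i+t-s)) (min i (t+1)), muF t j = (s-t+1) * Gm t
    have hswap : ∑ i ∈ Finset.Icc 1 (s+1),
        ∑ j ∈ Finset.Icc (max 1 (i + tv - s)) (min i (tv + 1)), muF tv j
        = ∑ j ∈ Finset.Icc 1 (tv + 1), ∑ _i ∈ Finset.Icc j (j + (s - tv)), muF tv j := by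
      refine Finset.sum_comm' ?_
      intro i j
      simp only [Finset.mem_Icc, le_max_iff, max_le_iff, le_min_iff, min_le_iff]
      omega
    rw [hswap, Gm, Finset.mul_sum]
    refine Finset.sum_congr rfl fun j _ => ?_
    rw [Finset.sum_const, Nat.card_Icc]
    have : j + (s - tv) + 1 - j = s - tv + 1 := by omega
    rw [this, nsmul_eq_mul]
  rw [Finset.sum_range_succ, hGs]
  simp

lemma alt1 (m : ℕ) :
    ∑ r ∈ range (m+1), (-1:ℤ)^r * (m.choose r : ℤ) = if m = 0 then 1 else 0 :=
  Int.alternating_sum_range_choose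

lemma alt2 (m : ℕ) (hm : 1 ≤ m) :
    ∑ r ∈ range (m+1), (-1:ℤ)^r * (m.choose r : ℤ) * (r : ℤ)
      = if m = 1 then -1 else 0 := by
  rw [Finset.sum_range_succ' (fun r => (-1:ℤ)^r * (m.choose r : ℤ) * (r : ℤ)) m]
  have key : ∀ r, (m.choose (r+1) : ℤ) * ((r+1 : ℕ) : ℤ) = (m : ℤ) * ((m-1).choose r : ℤ) := by
    intro r
    have := Nat.add_one_mul_choose_eq (m-1) r
    have hm1 : m - 1 + 1 = m := by omega
    rw [hm1] at this
    exact_mod_cast congrArg (fun z : ℕ => (z : ℤ)) this.symm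
  have step : ∑ r ∈ range m, (-1:ℤ)^(r+1) * (m.choose (r+1) : ℤ) * ((r+1 : ℕ) : ℤ)
      = -(m:ℤ) * ∑ r ∈ range m, (-1:ℤ)^r * ((m-1).choose r : ℤ) := by
    rw [Finset.mul_sum]
    refine Finset.sum_congr rfl fun r _ => ?_
    rw [mul_assoc, key r, pow_succ]
    ring
  push_cast at step ⊢
  rw [step]
  have : range m = range ((m-1)+1) := by congr 1; omega
  rw [this, alt1]
  by_cases h1 : m = 1
  · subst h1; norm_num
  · rw [if_neg (by omega), if_neg h1]
    ring

lemma altW (m : ℕ) :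
    ∑ r ∈ range (m+1), (-1:ℤ)^r * (m.choose r : ℤ) * (((m - r + 1 : ℕ)) : ℤ)
      = if m ≤ 1 then 1 else 0 := by
  have hsplit : ∀ r ∈ range (m+1), (-1:ℤ)^r * (m.choose r : ℤ) * (((m - r + 1 : ℕ)) : ℤ)
      = (-1:ℤ)^r * (m.choose r : ℤ) * ((m:ℤ) + 1) - (-1:ℤ)^r * (m.choose r : ℤ) * (r:ℤ) := by
    intro r hr
    have hrm : r ≤ m := by have := Finset.mem_range.mp hr; omega
    have : ((m - r + 1 : ℕ) : ℤ) = (m : ℤ) + 1 - (r : ℤ) := by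
      push_cast [Nat.cast_sub hrm]; ring
    rw [this]; ring
  rw [Finset.sum_congr rfl hsplit, Finset.sum_sub_distrib]
  rcases Nat.eq_zero_or_pos m with h0 | hpos
  · subst h0; norm_num
  · rw [alt2 m hpos, ← Finset.sum_mul, alt1]
    rcases eq_or_ne m 1 with h1 | h1
    · subst h1; norm_num
    · rw [if_neg (by omega), if_neg h1, if_neg (by omega)]
      ring

lemma sum_Icc_shift (u s : ℕ) (F : ℕ → ℤ) :
    ∑ t ∈ Finset.Icc u s, F t = ∑ r ∈ range (s + 1 - u), F (u + r) := by
  refine Finset.sum_nbij' (fun t => t - u) (fun r => u + r) ?_ ?_ ?_ ?_ ?_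
  · intro t ht
    have := Finset.mem_Icc.mp ht
    simp only [Finset.mem_range]
    omega
  · intro r hr
    have := Finset.mem_range.mp hr
    simp only [Finset.mem_Icc]
    omega
  · intro t ht
    have := Finset.mem_Icc.mp ht
    omega
  · intro r hr
    have := Finset.mem_range.mp hr
    omega
  · intro t ht
    have := Finset.mem_Icc.mp ht
    exact congrArg F (by omega)

-- coefficient collapse for C2
lemma coeffA (s u : ℕ) (hu : u ≤ s) :
    ∑ t ∈ Finset.Icc u s,
        (((s.choose t * 2 ^ (s-t) : ℕ) : ℤ) * ((s - t + 1 : ℕ) : ℤ))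
          * ((t.choose u : ℤ) * (-2:ℤ)^(t-u))
      = ((s.choose u * 2 ^ (s-u) : ℕ) : ℤ) * (if s - u ≤ 1 then 1 else 0) := by
  rw [sum_Icc_shift]
  have hm : s + 1 - u = (s - u) + 1 := by omega
  rw [hm]
  set m := s - u with hmdef
  have key : ∀ r ∈ range (m+1),
      (((s.choose (u+r) * 2 ^ (s-(u+r)) : ℕ) : ℤ) * ((s - (u+r) + 1 : ℕ) : ℤ))
        * (((u+r).choose u : ℤ) * (-2:ℤ)^((u+r)-u))
      = ((s.choose u * 2 ^ (s-u) : ℕ) : ℤ) * ((-1:ℤ)^r * (m.choose r : ℤ) * ((m - r + 1 : ℕ) : ℤ)) := by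
    intro r hr
    have hrm : r ≤ m := by have := Finset.mem_range.mp hr; omega
    have htu : u + r ≤ s := by omega
    have hch : (s.choose (u+r) : ℤ) * ((u+r).choose u : ℤ)
        = (s.choose u : ℤ) * ((s-u).choose r : ℤ) := by
      have := Nat.choose_mul (n := s) (k := u+r) (s := u) (by omega)
      have h2 : u + r - u = r := by omega
      rw [h2] at this
      exact_mod_cast congrArg (fun z : ℕ => (z : ℤ)) this
    have hpow : ((2:ℤ) ^ (s-(u+r))) * (-2:ℤ)^((u+r)-u) = 2^(s-u) * (-1:ℤ)^r := by
      have h2 : (u+r) - u = r := by omega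
      rw [h2, neg_pow, show ((-1:ℤ)^r * 2^r) = (-1:ℤ)^r * 2^r from rfl]
      have h3 : (2:ℤ)^(s-(u+r)) * ((-1:ℤ)^r * 2^r) = (-1:ℤ)^r * (2^(s-(u+r)) * 2^r) := by ring
      rw [h3, ← pow_add]
      have h4 : s - (u+r) + r = s - u := by omega
      rw [h4]
      ring
    have hrem : ((s - (u + r) : ℕ) : ℤ) = ((m - r : ℕ) : ℤ) :=
      congrArg (fun z : ℕ => (z : ℤ)) (by omega)
    push_cast
    push_cast at hch hpow
    rw [hrem]
    linear_combination ((((m - r : ℕ) : ℤ)) + 1) * (2:ℤ)^(s-(u+r)) * (-2:ℤ)^(u+r-u) * hch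
      + ((((m - r : ℕ) : ℤ)) + 1) * ((s.choose u : ℤ)) * (((s-u).choose r : ℤ)) * hpow
  rw [Finset.sum_congr rfl key, ← Finset.mul_sum, altW]

lemma keyfact (s k : ℕ) (hk : k ≤ s) :
    (s+1).choose k * (s+1-k).factorial = (s+1) * (s.choose k * (s-k).factorial) := by
  have h1 := Nat.choose_mul_factorial_mul_factorial (show k ≤ s+1 by omega)
  have h2 := Nat.choose_mul_factorial_mul_factorial hk
  apply Nat.eq_of_mul_eq_mul_left (Nat.factorial_pos k)
  calc k.factorial * ((s+1).choose k * (s+1-k).factorial)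
      = (s+1).choose k * k.factorial * (s+1-k).factorial := by ring
    _ = (s+1).factorial := h1
    _ = (s+1) * s.factorial := Nat.factorial_succ s
    _ = (s+1) * (s.choose k * k.factorial * (s-k).factorial) := by rw [h2]
    _ = k.factorial * ((s+1) * (s.choose k * (s-k).factorial)) := by ring

lemma U_tele (s : ℕ) : Uu (s+1) = -2*((s:ℤ)+1)*Uu s + ((s:ℤ)+2) := by
  have hlast : (-1:ℤ)^(s+1-(s+1)) * 2^(s+1-(s+1)) * ((s+1).choose (s+1) : ℤ)
      * (((s+1 : ℕ) : ℤ)+1) * (((s+1-(s+1)).factorial : ℕ) : ℤ) = (s:ℤ)+2 := by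
    simp [Nat.choose_self, Nat.sub_self]
    push_cast
    ring
  have hmain : ∑ k ∈ range (s+1), (-1:ℤ)^(s+1-k) * 2^(s+1-k) * (((s+1).choose k : ℕ) : ℤ)
        * ((k:ℤ)+1) * (((s+1-k).factorial : ℕ) : ℤ)
      = -2*((s:ℤ)+1) * ∑ k ∈ range (s+1), (-1:ℤ)^(s-k) * 2^(s-k) * ((s.choose k : ℕ) : ℤ)
        * ((k:ℤ)+1) * (((s-k).factorial : ℕ) : ℤ) := by
    rw [Finset.mul_sum]
    refine Finset.sum_congr rfl fun k hk => ?_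
    have hks : k ≤ s := by have := Finset.mem_range.mp hk; omega
    have hexp : s + 1 - k = (s - k) + 1 := by omega
    have hkf : (((s+1).choose k : ℕ) : ℤ) * (((s+1-k).factorial : ℕ) : ℤ)
        = (((s:ℤ)+1)) * ((s.choose k : ℕ) : ℤ) * (((s-k).factorial : ℕ) : ℤ) := by
      have := keyfact s k hks
      have hc : (((s+1).choose k * (s+1-k).factorial : ℕ) : ℤ)
          = (((s+1) * (s.choose k * (s-k).factorial) : ℕ) : ℤ) :=
        congrArg (fun z : ℕ => (z : ℤ)) this
      push_cast at hc
      push_cast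
      linarith [hc]
    rw [hexp] at hkf ⊢
    rw [pow_succ, pow_succ]
    linear_combination (-2:ℤ) * (-1:ℤ)^(s-k) * 2^(s-k) * ((k:ℤ)+1) * hkf
  show ∑ k ∈ range (s+1+1), (-1:ℤ)^(s+1-k) * 2^(s+1-k) * (((s+1).choose k : ℕ) : ℤ)
      * ((k:ℤ)+1) * (((s+1-k).factorial : ℕ) : ℤ) = _
  rw [Finset.sum_range_succ]
  rw [hmain, hlast]
  show -2*((s:ℤ)+1) * Uu s + ((s:ℤ)+2) = -2*((s:ℤ)+1) * Uu s + ((s:ℤ)+2)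
  rfl

lemma Uu_zero : Uu 0 = 1 := by simp [Uu]

-- Claim 2
lemma Gh_rec (s : ℕ) :
    ∑ t ∈ range (s+1), ((s.choose t * 2 ^ (s-t) : ℕ) : ℤ) * (((s - t + 1 : ℕ) : ℤ) * Gh t)
      = -(s+1 : ℤ) := by
  have step1 : ∑ t ∈ range (s+1), ((s.choose t * 2 ^ (s-t) : ℕ) : ℤ) * (((s - t + 1 : ℕ) : ℤ) * Gh t)
      = ∑ t ∈ range (s+1), ∑ u ∈ range (t+1),
          ((((s.choose t * 2 ^ (s-t) : ℕ) : ℤ) * ((s - t + 1 : ℕ) : ℤ))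
            * ((t.choose u : ℤ) * (-2:ℤ)^(t-u))) * (-(Uu u)) := by
    refine Finset.sum_congr rfl fun t _ => ?_
    rw [Gh, Finset.mul_sum, Finset.mul_sum]
    exact Finset.sum_congr rfl fun u _ => by ring
  have step2 : ∑ t ∈ range (s+1), ∑ u ∈ range (t+1),
        ((((s.choose t * 2 ^ (s-t) : ℕ) : ℤ) * ((s - t + 1 : ℕ) : ℤ))
          * ((t.choose u : ℤ) * (-2:ℤ)^(t-u))) * (-(Uu u))
      = ∑ u ∈ range (s+1), ∑ t ∈ Finset.Icc u s,
        ((((s.choose t * 2 ^ (s-t) : ℕ) : ℤ) * ((s - t + 1 : ℕ) : ℤ))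
          * ((t.choose u : ℤ) * (-2:ℤ)^(t-u))) * (-(Uu u)) := by
    refine Finset.sum_comm' ?_
    intro t u
    simp only [Finset.mem_range, Finset.mem_Icc]
    omega
  have step3 : ∀ u ∈ range (s+1), ∑ t ∈ Finset.Icc u s,
        ((((s.choose t * 2 ^ (s-t) : ℕ) : ℤ) * ((s - t + 1 : ℕ) : ℤ))
          * ((t.choose u : ℤ) * (-2:ℤ)^(t-u))) * (-(Uu u))
      = (((s.choose u * 2 ^ (s-u) : ℕ) : ℤ) * (if s - u ≤ 1 then 1 else 0)) * (-(Uu u)) := by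
    intro u hu
    rw [← Finset.sum_mul]
    rw [coeffA s u (by have := Finset.mem_range.mp hu; omega)]
  rw [step1, step2, Finset.sum_congr rfl step3]
  rcases Nat.eq_zero_or_pos s with h0 | hpos
  · subst h0
    simp [Uu_zero]
  · obtain ⟨s', rfl⟩ : ∃ s', s = s' + 1 := ⟨s - 1, by omega⟩
    rw [Finset.sum_range_succ, Finset.sum_range_succ]
    have hzero : ∑ u ∈ range s', (((( s'+1).choose u * 2 ^ (s'+1-u) : ℕ) : ℤ)
        * (if s'+1 - u ≤ 1 then 1 else 0)) * (-(Uu u)) = 0 := by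
      refine Finset.sum_eq_zero fun u hu => ?_
      have := Finset.mem_range.mp hu
      rw [if_neg (by omega)]
      ring
    rw [hzero, zero_add]
    have hu1 : (((s'+1).choose s' * 2 ^ (s'+1-s') : ℕ) : ℤ) = 2*((s':ℤ)+1) := by
      rw [Nat.choose_succ_self_right]
      push_cast [show s'+1-s' = 1 from by omega]
      ring
    have hu2 : (((s'+1).choose (s'+1) * 2 ^ (s'+1-(s'+1)) : ℕ) : ℤ) = 1 := by
      simp [Nat.choose_self]
    rw [hu1, hu2, if_pos (by omega : s'+1-s' ≤ 1), if_pos (by omega : s'+1-(s'+1) ≤ 1)]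
    rw [U_tele s']
    push_cast
    ring

-- Claim 3 : uniqueness
lemma Gm_eq_Gh : ∀ s, Gm s = Gh s := by
  intro s
  induction s using Nat.strong_induction_on with
  | _ s ih =>
    have h1 := Gm_rec s
    have h2 := Gh_rec s
    rw [Finset.sum_range_succ] at h1 h2
    have heq : ∑ t ∈ range s, ((s.choose t * 2 ^ (s-t) : ℕ) : ℤ) * (((s - t + 1 : ℕ) : ℤ) * Gm t)
        = ∑ t ∈ range s, ((s.choose t * 2 ^ (s-t) : ℕ) : ℤ) * (((s - t + 1 : ℕ) : ℤ) * Gh t) :=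
      Finset.sum_congr rfl fun t ht => by rw [ih t (Finset.mem_range.mp ht)]
    have e1 : ((s.choose s * 2 ^ (s-s) : ℕ) : ℤ) = 1 := by simp
    have e2 : ((s - s + 1 : ℕ) : ℤ) = 1 := by simp
    rw [e1, e2, one_mul, one_mul] at h1 h2
    linarith

-- coefficient collapse for C4
lemma coeffB (nn u : ℕ) (hu : u ≤ nn) :
    ∑ t ∈ Finset.Icc u nn,
        ((nn.choose t * 2 ^ (nn-t) : ℕ) : ℤ) * ((t.choose u : ℤ) * (-2:ℤ)^(t-u))
      = ((nn.choose u * 2 ^ (nn-u) : ℕ) : ℤ) * (if nn - u = 0 then 1 else 0) := by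
  rw [sum_Icc_shift]
  have hm : nn + 1 - u = (nn - u) + 1 := by omega
  rw [hm]
  set m := nn - u with hmdef
  have key : ∀ r ∈ range (m+1),
      ((nn.choose (u+r) * 2 ^ (nn-(u+r)) : ℕ) : ℤ)
        * (((u+r).choose u : ℤ) * (-2:ℤ)^((u+r)-u))
      = ((nn.choose u * 2 ^ (nn-u) : ℕ) : ℤ) * ((-1:ℤ)^r * (m.choose r : ℤ)) := by
    intro r hr
    have hrm : r ≤ m := by have := Finset.mem_range.mp hr; omega
    have htu : u + r ≤ nn := by omega
    have hch : (nn.choose (u+r) : ℤ) * ((u+r).choose u : ℤ)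
        = (nn.choose u : ℤ) * ((nn-u).choose r : ℤ) := by
      have := Nat.choose_mul (n := nn) (k := u+r) (s := u) (by omega)
      have h2 : u + r - u = r := by omega
      rw [h2] at this
      exact_mod_cast congrArg (fun z : ℕ => (z : ℤ)) this
    have hpow : ((2:ℤ) ^ (nn-(u+r))) * (-2:ℤ)^((u+r)-u) = 2^(nn-u) * (-1:ℤ)^r := by
      have h2 : (u+r) - u = r := by omega
      rw [h2, neg_pow]
      have h3 : (2:ℤ)^(nn-(u+r)) * ((-1:ℤ)^r * 2^r) = (-1:ℤ)^r * (2^(nn-(u+r)) * 2^r) := by ring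
      rw [h3, ← pow_add]
      have h4 : nn - (u+r) + r = nn - u := by omega
      rw [h4]
      ring
    push_cast
    push_cast at hch hpow
    linear_combination (2:ℤ)^(nn-(u+r)) * (-2:ℤ)^(u+r-u) * hch
      + ((nn.choose u : ℤ)) * (((nn-u).choose r : ℤ)) * hpow
  rw [Finset.sum_congr rfl key, ← Finset.mul_sum, alt1]

-- Claim 4 : binomial inversion
lemma inversion (nn : ℕ) :
    ∑ t ∈ range (nn+1), ((nn.choose t * 2 ^ (nn-t) : ℕ) : ℤ) * Gh t = -(Uu nn) := by
  have step1 : ∑ t ∈ range (nn+1), ((nn.choose t * 2 ^ (nn-t) : ℕ) : ℤ) * Gh t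
      = ∑ t ∈ range (nn+1), ∑ u ∈ range (t+1),
          (((nn.choose t * 2 ^ (nn-t) : ℕ) : ℤ) * ((t.choose u : ℤ) * (-2:ℤ)^(t-u))) * (-(Uu u)) := by
    refine Finset.sum_congr rfl fun t _ => ?_
    rw [Gh, Finset.mul_sum]
    exact Finset.sum_congr rfl fun u _ => by ring
  have step2 : ∑ t ∈ range (nn+1), ∑ u ∈ range (t+1),
        (((nn.choose t * 2 ^ (nn-t) : ℕ) : ℤ) * ((t.choose u : ℤ) * (-2:ℤ)^(t-u))) * (-(Uu u))
      = ∑ u ∈ range (nn+1), ∑ t ∈ Finset.Icc u nn,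
        (((nn.choose t * 2 ^ (nn-t) : ℕ) : ℤ) * ((t.choose u : ℤ) * (-2:ℤ)^(t-u))) * (-(Uu u)) := by
    refine Finset.sum_comm' ?_
    intro t u
    simp only [Finset.mem_range, Finset.mem_Icc]
    omega
  have step3 : ∀ u ∈ range (nn+1), ∑ t ∈ Finset.Icc u nn,
        (((nn.choose t * 2 ^ (nn-t) : ℕ) : ℤ) * ((t.choose u : ℤ) * (-2:ℤ)^(t-u))) * (-(Uu u))
      = (((nn.choose u * 2 ^ (nn-u) : ℕ) : ℤ) * (if nn - u = 0 then 1 else 0)) * (-(Uu u)) := by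
    intro u hu
    rw [← Finset.sum_mul, coeffB nn u (by have := Finset.mem_range.mp hu; omega)]
  rw [step1, step2, Finset.sum_congr rfl step3]
  rw [Finset.sum_range_succ]
  have hzero : ∑ u ∈ range nn, (((nn.choose u * 2 ^ (nn-u) : ℕ) : ℤ)
      * (if nn - u = 0 then 1 else 0)) * (-(Uu u)) = 0 := by
    refine Finset.sum_eq_zero fun u hu => ?_
    have := Finset.mem_range.mp hu
    rw [if_neg (by omega)]
    ring
  rw [hzero, zero_add, if_pos (by omega : nn - nn = 0)]
  simp [Nat.choose_self]

section Poset
variable {n : ℕ}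

def emb : CubeReesElt n → CubeRees n := fun w => ((w : WithTop (CubeReesElt n)) : CubeRees n)

lemma le_def' (w z : CubeReesElt n) : w ≤ z ↔
    ((∀ c, z.1.1 c = w.1.1 c ∨ z.1.1 c = 2) ∧ w.1.2 ≤ z.1.2 ∧
      z.1.2 + starCount w.1.1 ≤ w.1.2 + starCount z.1.1) := Iff.rfl

lemma starCount_mono {w z : CubeReesElt n} (h : w ≤ z) :
    starCount w.1.1 ≤ starCount z.1.1 := by
  apply Finset.card_le_card
  intro c hc
  simp only [Finset.mem_filter, Finset.mem_univ, true_and] at hc ⊢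
  rcases ((le_def' w z).mp h).1 c with h' | h'
  · rw [h', hc]
  · exact h'

lemma eq_of_le_of_starCount_eq {w z : CubeReesElt n} (h : w ≤ z)
    (hs : starCount w.1.1 = starCount z.1.1) : w = z := by
  obtain ⟨hcube, hj, hcount⟩ := (le_def' w z).mp h
  have hsub : (Finset.univ.filter fun c => w.1.1 c = 2)
      ⊆ (Finset.univ.filter fun c => z.1.1 c = 2) := by
    intro c hc
    simp only [Finset.mem_filter, Finset.mem_univ, true_and] at hc ⊢
    rcases hcube c with h' | h'
    · rw [h', hc]
    · exact h'
  have hseteq : (Finset.univ.filter fun c => w.1.1 c = 2)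
      = (Finset.univ.filter fun c => z.1.1 c = 2) :=
    Finset.eq_of_subset_of_card_le hsub (le_of_eq hs.symm)
  have hfun : w.1.1 = z.1.1 := by
    funext c
    rcases hcube c with h' | h'
    · exact h'.symm
    · have : c ∈ Finset.univ.filter fun c => z.1.1 c = 2 := by
        simp only [Finset.mem_filter, Finset.mem_univ, true_and]; exact h'
      rw [← hseteq] at this
      simp only [Finset.mem_filter, Finset.mem_univ, true_and] at this
      rw [this, h']
  apply Subtype.ext
  apply Prod.ext hfun
  omega

lemma icc_bot_coe (z : CubeReesElt n) :
    Set.Icc (⊥ : CubeRees n) (emb z) =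
      ↑(insert (⊥ : CubeRees n) ((Finset.univ.filter (fun w => w ≤ z)).image emb)) := by
  ext u
  simp only [Set.mem_Icc, Finset.coe_insert, Set.mem_insert_iff, Finset.coe_image,
    Set.mem_image, Finset.mem_coe, Finset.mem_filter, Finset.mem_univ, true_and]
  constructor
  · rintro ⟨-, hu⟩
    induction u using WithBot.recBotCoe with
    | bot => exact Or.inl rfl
    | coe v =>
      right
      rw [show emb z = ((↑z : WithTop (CubeReesElt n)) : CubeRees n) from rfl,
        WithBot.coe_le_coe] at hu
      induction v using WithTop.recTopCoe with
      | top => exact absurd (top_le_iff.mp hu) (WithTop.coe_ne_top)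
      | coe w =>
        rw [WithTop.coe_le_coe] at hu
        exact ⟨w, hu, rfl⟩
  · rintro (rfl | ⟨w, hw, rfl⟩)
    · exact ⟨le_refl _, bot_le⟩
    · refine ⟨bot_le, ?_⟩
      show ((↑w : WithTop (CubeReesElt n)) : CubeRees n) ≤ ((↑z : WithTop (CubeReesElt n)) : CubeRees n)
      rw [WithBot.coe_le_coe, WithTop.coe_le_coe]
      exact hw

lemma emb_inj : Function.Injective (emb (n := n)) := by
  intro a b h
  have : ((↑a : WithTop (CubeReesElt n)) : CubeRees n) = ((↑b : WithTop (CubeReesElt n)) : CubeRees n) := h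
  simpa using this

lemma emb_ne_bot (w : CubeReesElt n) : emb w ≠ ⊥ := WithBot.coe_ne_bot

lemma finsum_icc_bot (z : CubeReesElt n) (φ : CubeRees n → ℤ) :
    ∑ᶠ u ∈ Set.Icc (⊥ : CubeRees n) (emb z), φ u
      = φ ⊥ + ∑ w ∈ Finset.univ.filter (fun w => w ≤ z), φ (emb w) := by
  rw [icc_bot_coe, finsum_mem_coe_finset, Finset.sum_insert, Finset.sum_image
    (fun a _ b _ h => emb_inj h)]
  intro hmem
  obtain ⟨w, -, hw⟩ := Finset.mem_image.mp hmem
  exact emb_ne_bot w hw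

lemma mu_bot_coe (mu : CubeRees n → CubeRees n → ℤ)
    (hmu_refl : ∀ x, mu x x = 1)
    (hmu_rec : ∀ x y : CubeRees n, x < y → ∑ᶠ z ∈ Set.Icc x y, mu x z = 0) :
    ∀ z : CubeReesElt n, mu ⊥ (emb z) = muF (starCount z.1.1) z.1.2 := by
  suffices H : ∀ s, ∀ z : CubeReesElt n, starCount z.1.1 = s →
      mu ⊥ (emb z) = muF s z.1.2 by
    intro z; exact H _ z rfl
  intro s
  induction s using Nat.strong_induction_on with
  | _ s ih =>
  intro z hz
  have h0 := hmu_rec ⊥ (emb z) (WithBot.bot_lt_coe _)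
  rw [finsum_icc_bot, hmu_refl ⊥] at h0
  have hzmem : z ∈ Finset.univ.filter (fun w => w ≤ z) := by
    simp only [Finset.mem_filter, Finset.mem_univ, true_and]
    exact le_refl z
  rw [← Finset.add_sum_erase _ _ hzmem] at h0
  have herase : ∑ w ∈ (Finset.univ.filter (fun w => w ≤ z)).erase z, mu ⊥ (emb w)
      = ∑ w ∈ (Finset.univ.filter (fun w => w ≤ z)).erase z,
        muF (starCount w.1.1) w.1.2 := by
    refine Finset.sum_congr rfl fun w hw => ?_
    obtain ⟨hne, hwf⟩ := Finset.mem_erase.mp hw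
    have hle : w ≤ z := (Finset.mem_filter.mp hwf).2
    have h1 : starCount w.1.1 ≤ s := hz ▸ starCount_mono hle
    have h2 : starCount w.1.1 ≠ s := by
      intro he
      exact hne (eq_of_le_of_starCount_eq hle (by omega))
    exact ih _ (by omega) w rfl
  rw [herase] at h0
  have hsum : ∑ w ∈ Finset.univ.filter (fun w => w ≤ z),
      muF (starCount w.1.1) w.1.2 = -1 := by
    have hfe : Finset.univ.filter (fun w : CubeReesElt n => w ≤ z)
        = Finset.univ.filter (fun w : CubeReesElt n =>
            (∀ c, z.1.1 c = w.1.1 c ∨ z.1.1 c = 2) ∧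
              w.1.2 ∈ Finset.Icc (max 1 (z.1.2 + starCount w.1.1 - starCount z.1.1))
                (min z.1.2 (starCount w.1.1 + 1))) := by
      apply Finset.filter_congr
      intro w _
      rw [le_def']
      have hw2 := w.2
      simp only [Finset.mem_Icc]
      constructor
      · rintro ⟨h1, h2, h3⟩
        exact ⟨h1, by omega⟩
      · rintro ⟨h1, h2⟩
        exact ⟨h1, by omega⟩
    rw [hfe, sumgen z.1.1
      (fun t => Finset.Icc (max 1 (z.1.2 + t - starCount z.1.1)) (min z.1.2 (t + 1)))
      (fun t j hj => by simp only [Finset.mem_Icc] at hj; omega)]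
    rw [hz]
    rw [Finset.sum_range_succ]
    have hlast : Finset.Icc (max 1 (z.1.2 + s - s)) (min z.1.2 (s + 1)) = {z.1.2} := by
      have hz2 := z.2
      have e1 : max 1 (z.1.2 + s - s) = z.1.2 := by omega
      have e2 : min z.1.2 (s + 1) = z.1.2 := by
        have := z.2.2; rw [hz] at this; omega
      rw [e1, e2, Finset.Icc_self]
    rw [hlast, Finset.sum_singleton]
    have hcs : ((s.choose s * 2 ^ (s - s) : ℕ) : ℤ) = 1 := by simp
    rw [hcs, one_mul]
    have hmf := muF_def s z.1.2
    rw [← Finset.sum_attach (range s) (fun t => ((s.choose t * 2 ^ (s - t) : ℕ) : ℤ) *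
      ∑ j ∈ Finset.Icc (max 1 (z.1.2 + t - s)) (min z.1.2 (t + 1)), muF t j)]
    linarith [hmf]
  rw [← Finset.add_sum_erase _ _ hzmem, hz] at hsum
  linarith [h0, hsum]
end Poset

section Final
variable {n : ℕ}

lemma emb_ne_top (w : CubeReesElt n) : emb w ≠ ⊤ := by
  intro h
  have : ((↑w : WithTop (CubeReesElt n)) : CubeRees n)
      = ((⊤ : WithTop (CubeReesElt n)) : CubeRees n) := h
  exact WithTop.coe_ne_top (WithBot.coe_inj.mp this)

lemma bot_ne_top' : (⊥ : CubeRees n) ≠ ⊤ := by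
  intro h
  exact WithBot.bot_ne_coe (α := WithTop (CubeReesElt n)) h

lemma icc_bot_top : Set.Icc (⊥ : CubeRees n) ⊤ =
    ↑(insert (⊥ : CubeRees n) (insert ⊤ (Finset.univ.image emb))) := by
  ext u
  simp only [Set.mem_Icc, Finset.coe_insert, Set.mem_insert_iff, Finset.coe_image,
    Set.mem_image, Finset.mem_coe, Finset.mem_univ, true_and]
  constructor
  · rintro -
    induction u using WithBot.recBotCoe with
    | bot => exact Or.inl rfl
    | coe v =>
      right
      induction v using WithTop.recTopCoe with
      | top => exact Or.inl rfl
      | coe w => exact Or.inr ⟨w, rfl⟩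
  · rintro -
    exact ⟨bot_le, le_top⟩

lemma finsum_icc_top (φ : CubeRees n → ℤ) :
    ∑ᶠ u ∈ Set.Icc (⊥ : CubeRees n) ⊤, φ u
      = φ ⊥ + (φ ⊤ + ∑ w : CubeReesElt n, φ (emb w)) := by
  rw [icc_bot_top, finsum_mem_coe_finset, Finset.sum_insert, Finset.sum_insert,
    Finset.sum_image (fun a _ b _ h => emb_inj h)]
  · intro hmem
    obtain ⟨w, -, hw⟩ := Finset.mem_image.mp hmem
    exact emb_ne_top w hw
  · intro hmem
    rcases Finset.mem_insert.mp hmem with h | h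
    · exact bot_ne_top' h
    · obtain ⟨w, -, hw⟩ := Finset.mem_image.mp h
      exact emb_ne_bot w hw

lemma starCount_allstar : starCount (fun _ : Fin n => (2 : Fin 3)) = n := by
  rw [starCount]
  simp

lemma total_sum : ∑ w : CubeReesElt n, muF (starCount w.1.1) w.1.2 = -(Uu n) := by
  have hfe : (Finset.univ : Finset (CubeReesElt n))
      = Finset.univ.filter (fun w : CubeReesElt n =>
          (∀ c, (fun _ : Fin n => (2 : Fin 3)) c = w.1.1 c ∨
            (fun _ : Fin n => (2 : Fin 3)) c = 2) ∧
            w.1.2 ∈ Finset.Icc 1 (starCount w.1.1 + 1)) := by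
    refine (Finset.filter_true_of_mem fun w _ => ?_).symm
    refine ⟨fun c => Or.inr rfl, ?_⟩
    simp only [Finset.mem_Icc]
    exact w.2
  rw [hfe, sumgen (fun _ : Fin n => (2 : Fin 3)) (fun t => Finset.Icc 1 (t+1))
    (fun t j hj => by simp only [Finset.mem_Icc] at hj; omega)]
  rw [starCount_allstar]
  have : ∀ t ∈ range (n+1), ((n.choose t * 2 ^ (n-t) : ℕ) : ℤ) *
      (∑ j ∈ Finset.Icc 1 (t+1), muF t j) = ((n.choose t * 2 ^ (n-t) : ℕ) : ℤ) * Gh t := by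
    intro t _
    rw [show (∑ j ∈ Finset.Icc 1 (t+1), muF t j) = Gm t from rfl, Gm_eq_Gh]
  rw [Finset.sum_congr rfl this, inversion]

end Final

theorem statement11 (n : ℕ) (hn : 1 ≤ n)
    (mu : CubeRees n → CubeRees n → ℤ)
    (hmu_refl : ∀ x, mu x x = 1)
    (hmu_rec : ∀ x y : CubeRees n, x < y → ∑ᶠ z ∈ Set.Icc x y, mu x z = 0) :
    mu ⊥ ⊤ = -1 + ∑ i ∈ Finset.range (n + 1),
      (-1) ^ (n - i) * 2 ^ (n - i) * (n.choose i : ℤ) * (i + 1 : ℤ) *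
        ((n - i).factorial : ℤ) := by
  have hlt : (⊥ : CubeRees n) < ⊤ := by
    have := WithBot.bot_lt_coe (⊤ : WithTop (CubeReesElt n))
    exact this
  have h0 := hmu_rec ⊥ ⊤ hlt
  rw [finsum_icc_top, hmu_refl ⊥] at h0
  have hvals : ∑ w : CubeReesElt n, mu ⊥ (emb w)
      = ∑ w : CubeReesElt n, muF (starCount w.1.1) w.1.2 :=
    Finset.sum_congr rfl fun w _ => mu_bot_coe mu hmu_refl hmu_rec w
  rw [hvals, total_sum] at h0
  have : mu ⊥ ⊤ = -1 + Uu n := by linarith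
  rw [this]
  rfl
end

section
/- For every n ≥ 1, the Möbius function of the Rees product of the Boolean algebra with the chain satisfies μ(Rees(B_n, C_n)) = (−1)^{n+1} · D_n, where D_n is the number of derangements of {1,…,n}. -/
/-- The proper part of the concrete model of `Rees(B_n, C_n)`: pairs `(A, i)` with
`A` a nonempty subset of `{1,…,n}` and `1 ≤ i ≤ |A|`. -/
def BoolReesElt (n : ℕ) : Type :=
  {Ai : Finset (Fin n) × ℕ // Ai.1.Nonempty ∧ 1 ≤ Ai.2 ∧ Ai.2 ≤ Ai.1.card}

/-- The order: `(A,i) ≤ (B,j)` iff `A ⊆ B`, `i ≤ j`, and `j - i ≤ |B| - |A|`. -/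
instance (n : ℕ) : PartialOrder (BoolReesElt n) where
  le a b := a.1.1 ⊆ b.1.1 ∧ a.1.2 ≤ b.1.2 ∧ b.1.2 + a.1.1.card ≤ a.1.2 + b.1.1.card
  le_refl a := ⟨Finset.Subset.refl _, le_refl _, le_refl _⟩
  le_trans a b c hab hbc :=
    ⟨hab.1.trans hbc.1, hab.2.1.trans hbc.2.1, by
      have h1 := hab.2.2; have h2 := hbc.2.2; omega⟩
  le_antisymm a b hab hba := by
    apply Subtype.ext
    exact Prod.ext (Finset.Subset.antisymm hab.1 hba.1) (le_antisymm hab.2.1 hba.2.1)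

/-- The concrete model of `Rees(B_n, C_n)`: the proper part together with an
adjoined minimum `⊥` and maximum `⊤`. -/
abbrev BoolRees (n : ℕ) : Type := WithBot (WithTop (BoolReesElt n))

/-- The derangement number `D_m`: the number of permutations of `{1,…,m}` with
no fixed point. -/
noncomputable def derangementCount (m : ℕ) : ℕ :=
  Nat.card {σ : Equiv.Perm (Fin m) // ∀ i, σ i ≠ i}

/-! ### Auxiliary material -/

namespace BoolReesAux

open Finset

/-! #### The abstract Möbius recursion -/

private def muf : ℕ → ℕ → ℤ
  | a, i =>
    -1 - ∑ b ∈ (Finset.range a).attach,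
      (a.choose b.1 : ℤ) * ∑ j ∈ Finset.Icc 1 b.1,
        if j ≤ i ∧ i + b.1 ≤ j + a then muf b.1 j else 0
  termination_by a _ => a
  decreasing_by exact Finset.mem_range.mp b.2

private lemma muf_eq (a i : ℕ) : muf a i =
    -1 - ∑ b ∈ Finset.range a,
      (a.choose b : ℤ) * ∑ j ∈ Finset.Icc 1 b,
        if j ≤ i ∧ i + b ≤ j + a then muf b j else 0 := by
  rw [muf]
  congr 1
  rw [← Finset.sum_attach (Finset.range a) (fun b => (a.choose b : ℤ) * ∑ j ∈ Finset.Icc 1 b,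
        if j ≤ i ∧ i + b ≤ j + a then muf b j else 0)]

private def Fcol (b : ℕ) : ℤ := ∑ j ∈ Finset.Icc 1 b, muf b j

private lemma Fcol_rec (a : ℕ) : Fcol a =
    -(a : ℤ) - ∑ b ∈ Finset.range a, (a.choose b : ℤ) * (((a - b : ℕ) : ℤ) + 1) * Fcol b := by
  unfold Fcol
  have h1 : ∀ i, muf a i = -1 - ∑ b ∈ Finset.range a,
      (a.choose b : ℤ) * ∑ j ∈ Finset.Icc 1 b,
        if j ≤ i ∧ i + b ≤ j + a then muf b j else 0 := muf_eq a
  calc ∑ i ∈ Finset.Icc 1 a, muf a i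
      = ∑ i ∈ Finset.Icc 1 a, (-1 - ∑ b ∈ Finset.range a,
          (a.choose b : ℤ) * ∑ j ∈ Finset.Icc 1 b,
            if j ≤ i ∧ i + b ≤ j + a then muf b j else 0) :=
        Finset.sum_congr rfl (fun i _ => h1 i)
    _ = -(a:ℤ) - ∑ i ∈ Finset.Icc 1 a, ∑ b ∈ Finset.range a,
          (a.choose b : ℤ) * ∑ j ∈ Finset.Icc 1 b,
            if j ≤ i ∧ i + b ≤ j + a then muf b j else 0 := by
        rw [Finset.sum_sub_distrib, Finset.sum_const, Nat.card_Icc]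
        simp
    _ = -(a:ℤ) - ∑ b ∈ Finset.range a, (a.choose b : ℤ) *
          ∑ j ∈ Finset.Icc 1 b, ∑ i ∈ Finset.Icc 1 a,
            (if j ≤ i ∧ i + b ≤ j + a then muf b j else 0) := by
        rw [Finset.sum_comm]
        congr 1
        refine Finset.sum_congr rfl (fun b _ => ?_)
        rw [← Finset.mul_sum]
        congr 1
        exact Finset.sum_comm
    _ = -(a:ℤ) - ∑ b ∈ Finset.range a, (a.choose b : ℤ) * (((a - b : ℕ) : ℤ) + 1) * Fcol b := by
        congr 1
        refine Finset.sum_congr rfl (fun b hb => ?_)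
        rw [Finset.mem_range] at hb
        rw [mul_assoc]
        congr 1
        unfold Fcol
        rw [Finset.mul_sum]
        refine Finset.sum_congr rfl (fun j hj => ?_)
        rw [Finset.mem_Icc] at hj
        rw [← Finset.sum_filter]
        have hfil : (Finset.Icc 1 a).filter (fun i => j ≤ i ∧ i + b ≤ j + a)
            = Finset.Icc j (j + (a - b)) := by
          ext i
          simp only [Finset.mem_filter, Finset.mem_Icc]
          omega
        rw [hfil, Finset.sum_const, Nat.card_Icc]
        have : j + (a - b) + 1 - j = (a - b) + 1 := by omega
        rw [this]
        push_cast
        ring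

private def teleT (a b : ℕ) : ℤ := (-1:ℤ)^b * (((a - b : ℕ) : ℤ) + 1) * (a.descFactorial b : ℤ)

private lemma tele (a : ℕ) : ∑ b ∈ Finset.range (a+1), teleT a b = 1 := by
  have hstep : ∀ b ∈ Finset.range (a+1), teleT a b =
      (fun b => (-1:ℤ)^b * (a.descFactorial b : ℤ)) b
        - (fun b => (-1:ℤ)^b * (a.descFactorial b : ℤ)) (b+1) := by
    intro b _
    simp only []
    rw [Nat.descFactorial_succ]
    unfold teleT
    push_cast
    ring
  rw [Finset.sum_congr rfl hstep, Finset.sum_range_sub']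
  have h0 : a.descFactorial (a+1) = 0 := Nat.descFactorial_eq_zero_iff_lt.mpr (Nat.lt_succ_self a)
  simp [h0]

private lemma Fcol_closed (a : ℕ) (ha : 1 ≤ a) : Fcol a = (-1:ℤ)^a * (a.factorial : ℤ) := by
  induction a using Nat.strong_induction_on with
  | _ a IH =>
    obtain ⟨m, rfl⟩ : ∃ m, a = m + 1 := ⟨a - 1, by omega⟩
    have hF : ∀ b ∈ Finset.range (m+1),
        Fcol b = if b = 0 then 0 else (-1:ℤ)^b * (b.factorial : ℤ) := by
      intro b hb
      rw [Finset.mem_range] at hb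
      by_cases hb0 : b = 0
      · simp [hb0, Fcol]
      · rw [if_neg hb0]
        exact IH b hb (Nat.one_le_iff_ne_zero.mpr hb0)
    rw [Fcol_rec]
    have hc : ∑ b ∈ Finset.range (m+1), ((m+1).choose b : ℤ) * (((m + 1 - b : ℕ) : ℤ) + 1) * Fcol b
        = ∑ b ∈ Finset.range (m+1), teleT (m+1) b - teleT (m+1) 0 := by
      rw [Finset.sum_range_succ', Finset.sum_range_succ' (teleT (m+1)) m]
      have h0 : ((m+1).choose 0 : ℤ) * (((m + 1 - 0 : ℕ) : ℤ) + 1) * Fcol 0 = 0 := by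
        simp [Fcol]
      rw [h0]
      have hpt : ∀ i ∈ Finset.range m,
          ((m+1).choose (i+1) : ℤ) * (((m + 1 - (i+1) : ℕ) : ℤ) + 1) * Fcol (i+1)
            = teleT (m+1) (i+1) := by
        intro i hi
        rw [Finset.mem_range] at hi
        rw [hF (i+1) (by rw [Finset.mem_range]; omega)]
        rw [if_neg (Nat.succ_ne_zero i)]
        unfold teleT
        rw [Nat.descFactorial_eq_factorial_mul_choose]
        push_cast
        ring
      rw [Finset.sum_congr rfl hpt]
      ring
    rw [hc]
    have htele := tele (m+1)
    rw [Finset.sum_range_succ] at htele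
    have hT0 : teleT (m+1) 0 = (m : ℤ) + 2 := by
      unfold teleT; push_cast; ring_nf; simp; push_cast; ring
    have hTa : teleT (m+1) (m+1) = (-1:ℤ)^(m+1) * ((m+1).factorial : ℤ) := by
      unfold teleT
      rw [Nat.sub_self, Nat.descFactorial_self]
      simp
    rw [hTa] at htele
    rw [hT0]
    push_cast at htele ⊢
    linarith [htele]

/-! #### Instances -/

instance (n : ℕ) : DecidableEq (BoolReesElt n) := fun a b =>
  decidable_of_iff (a.1 = b.1) Subtype.ext_iff.symm

instance (n : ℕ) : DecidableRel (α := BoolReesElt n) (· ≤ ·) := fun a b =>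
  decidable_of_iff (a.1.1 ⊆ b.1.1 ∧ a.1.2 ≤ b.1.2 ∧ b.1.2 + a.1.1.card ≤ a.1.2 + b.1.1.card)
    Iff.rfl

instance (n : ℕ) : DecidableRel (α := BoolReesElt n) (· < ·) := fun a b =>
  decidable_of_iff (a ≤ b ∧ ¬ b ≤ a) lt_iff_le_not_ge.symm

noncomputable instance (n : ℕ) : Fintype (BoolReesElt n) := by
  apply Fintype.ofInjective (fun w : BoolReesElt n => (w.1.1, (⟨w.1.2, by
    have := w.2.2.2; have := w.1.1.card_le_univ; simp at this ⊢; omega⟩ : Fin (n+1))))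
  intro a b h
  simp only [Prod.mk.injEq, Fin.mk.injEq] at h
  exact Subtype.ext (Prod.ext h.1 h.2)

/-! #### The embedding of the proper part -/

private def emb (n : ℕ) (w : BoolReesElt n) : BoolRees n :=
  ((w : WithTop (BoolReesElt n)) : BoolRees n)

private lemma emb_injective (n : ℕ) : Function.Injective (emb n) := fun a b h => by
  unfold emb at h
  exact WithTop.coe_injective (WithBot.coe_injective h)

private lemma emb_le_emb (n : ℕ) (w z : BoolReesElt n) : emb n w ≤ emb n z ↔ w ≤ z := by
  unfold emb; rw [WithBot.coe_le_coe, WithTop.coe_le_coe]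

private lemma le_emb_iff (n : ℕ) (z : BoolReesElt n) (x : BoolRees n) :
    x ≤ emb n z ↔ x = ⊥ ∨ ∃ w, w ≤ z ∧ x = emb n w := by
  induction x using WithBot.recBotCoe with
  | bot => simp
  | coe y =>
    induction y using WithTop.recTopCoe with
    | top =>
      constructor
      · intro h
        exfalso
        unfold emb at h
        rw [WithBot.coe_le_coe] at h
        exact (WithTop.not_top_le_coe _) h
      · rintro (h | ⟨w, _, h⟩) <;> simp [emb] at h
    | coe w =>
      constructor
      · intro h
        right
        refine ⟨w, ?_, rfl⟩
        unfold emb at h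
        rwa [WithBot.coe_le_coe, WithTop.coe_le_coe] at h
      · rintro (h | ⟨w', hw', h⟩)
        · simp [emb] at h
        · have : w = w' := by
            unfold emb at h
            exact WithTop.coe_injective (WithBot.coe_injective h)
          subst this
          exact (emb_le_emb n w z).mpr hw'

/-! #### The counting lemma -/

private lemma subsum (n : ℕ) (A : Finset (Fin n)) (Q : ℕ → ℕ → Prop) [∀ b j, Decidable (Q b j)]
    (k : ℕ → ℕ → ℤ) :
    ∑ w ∈ Finset.univ.filter (fun w : BoolReesElt n => w.1.1 ⊆ A ∧ Q w.1.1.card w.1.2),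
        k w.1.1.card w.1.2
      = ∑ b ∈ Finset.range (A.card + 1), (A.card.choose b : ℤ) *
          ∑ j ∈ Finset.Icc 1 b, if Q b j then k b j else 0 := by
  have hn : ∀ B : Finset (Fin n), B.card ≤ n := by
    intro B
    have := B.card_le_univ
    simpa using this
  have step1 : ∑ w ∈ Finset.univ.filter
        (fun w : BoolReesElt n => w.1.1 ⊆ A ∧ Q w.1.1.card w.1.2), k w.1.1.card w.1.2
      = ∑ p ∈ (A.powerset ×ˢ Finset.Icc 1 n).filter
          (fun p => p.1.Nonempty ∧ 1 ≤ p.2 ∧ p.2 ≤ p.1.card ∧ Q p.1.card p.2),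
          k p.1.card p.2 := by
    apply Finset.sum_bij (fun w _ => w.1)
    · intro w hw
      rw [Finset.mem_filter] at hw ⊢
      obtain ⟨-, hsub, hQ⟩ := hw
      refine ⟨?_, w.2.1, w.2.2.1, w.2.2.2, hQ⟩
      rw [Finset.mem_product, Finset.mem_powerset, Finset.mem_Icc]
      exact ⟨hsub, w.2.2.1, w.2.2.2.trans (hn _)⟩
    · intro a _ b _ h
      exact Subtype.ext h
    · intro p hp
      rw [Finset.mem_filter, Finset.mem_product, Finset.mem_powerset] at hp
      refine ⟨⟨p, hp.2.1, hp.2.2.1, hp.2.2.2.1⟩, ?_, rfl⟩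
      refine Finset.mem_filter.mpr ?_
      exact ⟨Finset.mem_univ _, hp.1.1, hp.2.2.2.2⟩
    · intro w _
      rfl
  rw [step1, Finset.sum_filter, Finset.sum_product]
  have step2 : ∀ B ∈ A.powerset,
      (∑ j ∈ Finset.Icc 1 n, if B.Nonempty ∧ 1 ≤ j ∧ j ≤ B.card ∧ Q B.card j
          then k B.card j else 0)
      = ∑ j ∈ Finset.Icc 1 B.card, if Q B.card j then k B.card j else 0 := by
    intro B _
    rw [← Finset.sum_filter, ← Finset.sum_filter]
    apply Finset.sum_congr _ (fun _ _ => rfl)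
    ext j
    simp only [Finset.mem_filter, Finset.mem_Icc, ← Finset.card_pos]
    constructor
    · rintro ⟨-, -, h1, h2, h3⟩
      exact ⟨⟨h1, h2⟩, h3⟩
    · rintro ⟨⟨h1, h2⟩, h3⟩
      exact ⟨⟨h1, (h2.trans (hn B))⟩, by omega, h1, h2, h3⟩
  rw [Finset.sum_congr rfl step2]
  rw [Finset.sum_powerset_apply_card
    (fun c => ∑ j ∈ Finset.Icc 1 c, if Q c j then k c j else 0)]
  apply Finset.sum_congr rfl
  intro b _
  rw [nsmul_eq_mul]

/-! #### Strict order facts -/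

private lemma lt_iff' (n : ℕ) (w z : BoolReesElt n) :
    w < z ↔ w.1.1 ⊆ z.1.1 ∧ (w.1.1.card < z.1.1.card ∧ w.1.2 ≤ z.1.2 ∧
      z.1.2 + w.1.1.card ≤ w.1.2 + z.1.1.card) := by
  rw [lt_iff_le_and_ne]
  have hle : (w ≤ z) = (w.1.1 ⊆ z.1.1 ∧ w.1.2 ≤ z.1.2 ∧
      z.1.2 + w.1.1.card ≤ w.1.2 + z.1.1.card) := rfl
  rw [hle]
  constructor
  · rintro ⟨⟨hsub, h1, h2⟩, hne⟩
    refine ⟨hsub, ?_, h1, h2⟩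
    have hcard := Finset.card_le_card hsub
    rcases lt_or_eq_of_le hcard with h | h
    · exact h
    · exfalso
      apply hne
      have hAB : w.1.1 = z.1.1 := Finset.eq_of_subset_of_card_le hsub (le_of_eq h.symm)
      have hij : w.1.2 = z.1.2 := by omega
      exact Subtype.ext (Prod.ext hAB hij)
  · rintro ⟨hsub, hcard, h1, h2⟩
    refine ⟨⟨hsub, h1, h2⟩, fun he => ?_⟩
    rw [he] at hcard
    exact lt_irrefl _ hcard

/-! #### Interval decompositions -/

private lemma Icc_bot_emb (n : ℕ) (z : BoolReesElt n) :
    Set.Icc (⊥ : BoolRees n) (emb n z)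
      = ↑(insert ⊥ ((Finset.univ.filter (· ≤ z)).image (emb n))) := by
  ext x
  simp only [Set.mem_Icc, Finset.coe_insert, Set.mem_insert_iff, Finset.coe_image,
    Set.mem_image, Finset.mem_coe, Finset.mem_filter, Finset.mem_univ, true_and,
    bot_le, true_and]
  rw [le_emb_iff]
  constructor
  · rintro (h | ⟨w, hw, h⟩)
    · exact Or.inl h
    · exact Or.inr ⟨w, hw, h.symm⟩
  · rintro (h | ⟨w, hw, h⟩)
    · exact Or.inl h
    · exact Or.inr ⟨w, hw, h.symm⟩

private lemma Icc_bot_top (n : ℕ) :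
    Set.Icc (⊥ : BoolRees n) (⊤ : BoolRees n)
      = ↑(insert ⊥ (insert ⊤ (Finset.univ.image (emb n)))) := by
  ext x
  simp only [Set.mem_Icc, Finset.coe_insert, Set.mem_insert_iff, Finset.coe_image,
    Set.mem_image, Finset.mem_coe, Finset.mem_univ, true_and, bot_le, le_top, and_self,
    true_iff]
  induction x using WithBot.recBotCoe with
  | bot => exact Or.inl rfl
  | coe y =>
    induction y using WithTop.recTopCoe with
    | top => exact Or.inr (Or.inl rfl)
    | coe w => exact Or.inr (Or.inr ⟨w, rfl⟩)

private lemma bot_not_mem_image (n : ℕ) (s : Finset (BoolReesElt n)) :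
    (⊥ : BoolRees n) ∉ s.image (emb n) := by
  rw [Finset.mem_image]
  rintro ⟨w, -, h⟩
  exact WithBot.coe_ne_bot h

private lemma top_not_mem_image (n : ℕ) (s : Finset (BoolReesElt n)) :
    (⊤ : BoolRees n) ∉ s.image (emb n) := by
  rw [Finset.mem_image]
  rintro ⟨w, -, h⟩
  have : (w : WithTop (BoolReesElt n)) = ⊤ := WithBot.coe_injective h
  exact WithTop.coe_ne_top this

/-! #### The key induction -/

private lemma mu_emb (n : ℕ) (mu : BoolRees n → BoolRees n → ℤ)
    (hmu_refl : ∀ x, mu x x = 1)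
    (hmu_rec : ∀ x y : BoolRees n, x < y → ∑ᶠ z ∈ Set.Icc x y, mu x z = 0) :
    ∀ (a : ℕ) (z : BoolReesElt n), z.1.1.card ≤ a →
      mu ⊥ (emb n z) = muf z.1.1.card z.1.2 := by
  intro a
  induction a with
  | zero =>
    intro z hz
    exfalso
    have := Finset.card_pos.mpr z.2.1
    omega
  | succ a IH =>
    intro z hz
    have hrec := hmu_rec ⊥ (emb n z) (WithBot.bot_lt_coe _)
    rw [Icc_bot_emb, finsum_mem_coe_finset,
      Finset.sum_insert (bot_not_mem_image n _),
      Finset.sum_image (fun a _ b _ h => emb_injective n h), hmu_refl ⊥] at hrec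
    have hsplit : Finset.univ.filter (· ≤ z) = insert z (Finset.univ.filter (· < z)) := by
      ext w
      simp only [Finset.mem_filter, Finset.mem_univ, true_and, Finset.mem_insert]
      rw [le_iff_lt_or_eq]
      tauto
    rw [hsplit, Finset.sum_insert (by
      simp only [Finset.mem_filter, Finset.mem_univ, true_and]
      exact lt_irrefl z)] at hrec
    have hIH : ∀ w ∈ Finset.univ.filter (· < z), mu ⊥ (emb n w) = muf w.1.1.card w.1.2 := by
      intro w hw
      rw [Finset.mem_filter] at hw
      have hcard : w.1.1.card < z.1.1.card := ((lt_iff' n w z).mp hw.2).2.1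
      exact IH w (by omega)
    rw [Finset.sum_congr rfl hIH] at hrec
    have hfilter : Finset.univ.filter (fun w : BoolReesElt n => w < z)
        = Finset.univ.filter (fun w : BoolReesElt n => w.1.1 ⊆ z.1.1 ∧
            (w.1.1.card < z.1.1.card ∧ w.1.2 ≤ z.1.2 ∧
              z.1.2 + w.1.1.card ≤ w.1.2 + z.1.1.card)) := by
      ext w
      simp only [Finset.mem_filter, Finset.mem_univ, true_and]
      exact lt_iff' n w z
    rw [hfilter,
      subsum n z.1.1 (fun b j => b < z.1.1.card ∧ j ≤ z.1.2 ∧ z.1.2 + b ≤ j + z.1.1.card) muf]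
      at hrec
    have htrim : ∑ b ∈ Finset.range (z.1.1.card + 1), (z.1.1.card.choose b : ℤ) *
          ∑ j ∈ Finset.Icc 1 b,
            (if b < z.1.1.card ∧ j ≤ z.1.2 ∧ z.1.2 + b ≤ j + z.1.1.card then muf b j else 0)
        = ∑ b ∈ Finset.range z.1.1.card, (z.1.1.card.choose b : ℤ) *
          ∑ j ∈ Finset.Icc 1 b,
            (if j ≤ z.1.2 ∧ z.1.2 + b ≤ j + z.1.1.card then muf b j else 0) := by
      rw [Finset.sum_range_succ]
      have hlast : (∑ j ∈ Finset.Icc 1 z.1.1.card,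
          if z.1.1.card < z.1.1.card ∧ j ≤ z.1.2 ∧ z.1.2 + z.1.1.card ≤ j + z.1.1.card
          then muf z.1.1.card j else 0) = 0 := by
        apply Finset.sum_eq_zero
        intro j _
        rw [if_neg]
        rintro ⟨h, -⟩
        exact lt_irrefl _ h
      rw [hlast, mul_zero, add_zero]
      refine Finset.sum_congr rfl (fun b hb => ?_)
      rw [Finset.mem_range] at hb
      congr 1
      refine Finset.sum_congr rfl (fun j _ => ?_)
      rw [if_congr (and_iff_right hb) rfl rfl]
    rw [htrim] at hrec
    rw [muf_eq]
    linarith [hrec]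

/-! #### Derangement identity -/

private lemma derang_id (n : ℕ) :
    ∑ b ∈ Finset.range (n+1), (-1:ℤ)^b * (n.descFactorial b : ℤ)
      = (-1:ℤ)^n * (numDerangements n : ℤ) := by
  rw [numDerangements_sum, Finset.mul_sum,
    ← Finset.sum_range_reflect (fun b => (-1:ℤ)^b * (n.descFactorial b : ℤ)) (n+1)]
  refine Finset.sum_congr rfl (fun j hj => ?_)
  rw [Finset.mem_range] at hj
  have hj' : j ≤ n := by omega
  have h1 : n + 1 - 1 - j = n - j := by omega
  rw [h1]
  have h2 : n.descFactorial (n - j) = (j+1).ascFactorial (n - j) := by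
    have := Nat.add_descFactorial_eq_ascFactorial j (n - j)
    rwa [Nat.add_sub_cancel' hj'] at this
  rw [h2]
  have h3 : (-1:ℤ)^(n-j) = (-1:ℤ)^n * (-1:ℤ)^j := by
    have hsq : (-1:ℤ)^j * (-1:ℤ)^j = 1 := by
      rw [← pow_add]
      exact Even.neg_one_pow ⟨j, rfl⟩
    calc (-1:ℤ)^(n-j) = (-1:ℤ)^(n-j) * ((-1:ℤ)^j * (-1:ℤ)^j) := by rw [hsq, mul_one]
      _ = ((-1:ℤ)^(n-j) * (-1:ℤ)^j) * (-1:ℤ)^j := by ring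
      _ = (-1:ℤ)^n * (-1:ℤ)^j := by rw [← pow_add]; congr 2; omega
  rw [h3]
  ring

private lemma derangementCount_eq (n : ℕ) :
    derangementCount n = numDerangements n := by
  rw [derangementCount, Nat.card_eq_fintype_card,
    ← card_derangements_fin_eq_numDerangements]
  apply Fintype.card_congr
  exact Equiv.subtypeEquivRight (fun σ => Iff.rfl)

end BoolReesAux

theorem statement14 (n : ℕ) (hn : 1 ≤ n)
    (mu : BoolRees n → BoolRees n → ℤ)
    (hmu_refl : ∀ x, mu x x = 1)
    (hmu_rec : ∀ x y : BoolRees n, x < y → ∑ᶠ z ∈ Set.Icc x y, mu x z = 0) :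
    mu ⊥ ⊤ = (-1) ^ (n + 1) * (derangementCount n : ℤ) := by
  classical
  have hbotlt : (⊥ : BoolRees n) < ⊤ := by
    apply bot_lt_iff_ne_bot.mpr
    simp
  have hrec := hmu_rec ⊥ ⊤ hbotlt
  rw [BoolReesAux.Icc_bot_top, finsum_mem_coe_finset] at hrec
  rw [Finset.sum_insert (by
      rw [Finset.mem_insert]
      push_neg
      refine ⟨?_, BoolReesAux.bot_not_mem_image n _⟩
      simp),
    Finset.sum_insert (BoolReesAux.top_not_mem_image n _),
    Finset.sum_image (fun a _ b _ h => BoolReesAux.emb_injective n h),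
    hmu_refl ⊥] at hrec
  have hkey : ∀ w ∈ (Finset.univ : Finset (BoolReesElt n)),
      mu ⊥ (BoolReesAux.emb n w) = BoolReesAux.muf w.1.1.card w.1.2 := fun w _ =>
    BoolReesAux.mu_emb n mu hmu_refl hmu_rec n w (by
      have := w.1.1.card_le_univ
      simpa using this)
  rw [Finset.sum_congr rfl hkey] at hrec
  have h2 : ∑ w : BoolReesElt n, BoolReesAux.muf w.1.1.card w.1.2
      = ∑ b ∈ Finset.range (n+1), (n.choose b : ℤ) *
          ∑ j ∈ Finset.Icc 1 b, BoolReesAux.muf b j := by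
    have h3 := BoolReesAux.subsum n Finset.univ (fun _ _ => True) BoolReesAux.muf
    simp only [if_true, Finset.card_univ, Fintype.card_fin] at h3
    rw [← h3]
    apply Finset.sum_congr _ (fun _ _ => rfl)
    ext w
    simp [Finset.subset_univ]
  rw [h2] at hrec
  -- evaluate the column sums
  have h4 : ∑ b ∈ Finset.range (n+1), (n.choose b : ℤ) *
        ∑ j ∈ Finset.Icc 1 b, BoolReesAux.muf b j
      = (∑ b ∈ Finset.range (n+1), (-1:ℤ)^b * (n.descFactorial b : ℤ)) - 1 := by
    rw [Finset.sum_range_succ' (fun b => (n.choose b : ℤ) *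
        ∑ j ∈ Finset.Icc 1 b, BoolReesAux.muf b j),
      Finset.sum_range_succ' (fun b => (-1:ℤ)^b * (n.descFactorial b : ℤ))]
    have hz : ((n.choose 0 : ℤ) * ∑ j ∈ Finset.Icc 1 0, BoolReesAux.muf 0 j) = 0 := by
      simp
    have hz2 : (-1:ℤ)^0 * (n.descFactorial 0 : ℤ) = 1 := by simp
    rw [hz, hz2]
    have hpt : ∀ i ∈ Finset.range n,
        ((n.choose (i+1) : ℤ) * ∑ j ∈ Finset.Icc 1 (i+1), BoolReesAux.muf (i+1) j)
          = (-1:ℤ)^(i+1) * (n.descFactorial (i+1) : ℤ) := by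
      intro i _
      have : (∑ j ∈ Finset.Icc 1 (i+1), BoolReesAux.muf (i+1) j)
          = (-1:ℤ)^(i+1) * ((i+1).factorial : ℤ) :=
        BoolReesAux.Fcol_closed (i+1) (Nat.succ_le_succ (Nat.zero_le i))
      rw [this, Nat.descFactorial_eq_factorial_mul_choose]
      push_cast
      ring
    rw [Finset.sum_congr rfl hpt]
    ring
  rw [h4, BoolReesAux.derang_id] at hrec
  rw [BoolReesAux.derangementCount_eq, pow_succ]
  linarith [hrec]
end

section
/- For every n ≥ 0, the signed derangement number D_n^± is the nearest integer to 2^n · n! / √e; that is, |D_n^± − 2^n · n! / √e| < 1/2, where e is Euler's number. -/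
/-- The signed derangement number `D_m^±`: the number of signed permutations
`(σ, ε)` on `m` elements with no fixed point, where an index `i` is a fixed point
if `σ(i) = i` and `ε(i) = +1` (encoded as `true`). -/
noncomputable def signedDerangementCount (m : ℕ) : ℕ :=
  Nat.card {p : Equiv.Perm (Fin m) × (Fin m → Bool) //
    ∀ i, ¬(p.1 i = i ∧ p.2 i = true)}

open Equiv Finset

@[simp] lemma my_mem_inf_finset {ι α : Type*} [Fintype α] [DecidableEq α]
    (s : Finset ι) (f : ι → Finset α) (a : α) :
    a ∈ s.inf f ↔ ∀ i ∈ s, a ∈ f i := by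
  induction s using Finset.cons_induction <;> simp [*]

lemma aux_card (n : ℕ) (t : Finset (Fin n)) :
    Fintype.card {p : Perm (Fin n) × (Fin n → Bool) // ∀ i ∈ t, p.1 i = i ∧ p.2 i = true}
      = (n - t.card).factorial * 2 ^ (n - t.card) := by
  have e1 : {p : Perm (Fin n) × (Fin n → Bool) // ∀ i ∈ t, p.1 i = i ∧ p.2 i = true}
      ≃ {σ : Perm (Fin n) // ∀ i ∈ t, σ i = i} × {ε : Fin n → Bool // ∀ i ∈ t, ε i = true} :=
    (Equiv.subtypeEquivRight (fun p =>
      ⟨fun h => ⟨fun i hi => (h i hi).1, fun i hi => (h i hi).2⟩,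
       fun h i hi => ⟨h.1 i hi, h.2 i hi⟩⟩)).trans (Equiv.subtypeProdEquivProd)
  have e2 : {σ : Perm (Fin n) // ∀ i ∈ t, σ i = i} ≃ Perm {x : Fin n // x ∉ t} := by
    refine (Equiv.subtypeEquivRight ?_).trans
      (Equiv.Perm.subtypeEquivSubtypePerm (fun x : Fin n => x ∉ t)).symm
    intro σ
    constructor
    · intro h a ha; exact h a (not_not.mp ha)
    · intro h i hi; exact h i (not_not_intro hi)
  have e3 : {ε : Fin n → Bool // ∀ i ∈ t, ε i = true} ≃ ({x : Fin n // x ∉ t} → Bool) :=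
    { toFun := fun ε x => ε.1 x.1
      invFun := fun g => ⟨fun a => if h : a ∈ t then true else g ⟨a, h⟩,
        fun i hi => by simp [hi]⟩
      left_inv := fun ε => Subtype.ext (funext fun a => by
        by_cases h : a ∈ t
        · simp [h, ε.2 a h]
        · simp [h])
      right_inv := fun g => funext fun x => by simp [x.2] }
  have hc : Fintype.card {x : Fin n // x ∉ t} = n - t.card := by
    rw [Fintype.card_subtype_compl]
    simp [Fintype.card_coe]
  rw [Fintype.card_congr e1, Fintype.card_prod, Fintype.card_congr e2,
    Fintype.card_perm, Fintype.card_congr e3, Fintype.card_fun, hc, Fintype.card_bool]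

lemma inf_card (n : ℕ) (t : Finset (Fin n)) :
    (t.inf fun i => Finset.univ.filter
      fun p : Perm (Fin n) × (Fin n → Bool) => p.1 i = i ∧ p.2 i = true).card
      = (n - t.card).factorial * 2 ^ (n - t.card) := by
  rw [← aux_card n t, Fintype.card_subtype]
  congr 1
  ext p
  simp

lemma signedDerangementCount_eq (n : ℕ) :
    (signedDerangementCount n : ℤ)
      = ∑ k ∈ Finset.range (n + 1),
          (-1) ^ k * (n.choose k : ℤ) * ((n - k).factorial * 2 ^ (n - k)) := by
  classical
  set S : Fin n → Finset (Perm (Fin n) × (Fin n → Bool)) :=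
    fun i => Finset.univ.filter fun p => p.1 i = i ∧ p.2 i = true with hS
  have h0 : signedDerangementCount n = ((Finset.univ : Finset (Fin n)).inf fun i => (S i)ᶜ).card := by
    rw [signedDerangementCount, Nat.card_eq_fintype_card, Fintype.card_subtype]
    congr 1
    ext p
    simp [hS]
  rw [h0, Finset.inclusion_exclusion_card_inf_compl, Finset.sum_powerset]
  have hcard : ((Finset.univ : Finset (Fin n)).card) = n := by simp
  rw [hcard]
  refine Finset.sum_congr rfl fun j hj => ?_
  have : ∀ t ∈ Finset.powersetCard j (Finset.univ : Finset (Fin n)),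
      (-1 : ℤ) ^ t.card * (t.inf S).card
        = (-1 : ℤ) ^ j * ((n - j).factorial * 2 ^ (n - j)) := by
    intro t ht
    have htc : t.card = j := (Finset.mem_powersetCard.mp ht).2
    rw [hS, inf_card, htc]
    push_cast
    ring
  rw [Finset.sum_congr rfl this, Finset.sum_const, Finset.card_powersetCard, hcard,
    nsmul_eq_mul]
  ring

lemma signedDerangementCount_real (n : ℕ) :
    (signedDerangementCount n : ℝ)
      = 2 ^ n * (n.factorial : ℝ) *
          ∑ k ∈ Finset.range (n + 1), (-(1/2) : ℝ) ^ k / (k.factorial : ℝ) := by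
  have h := signedDerangementCount_eq n
  have h' : (signedDerangementCount n : ℝ)
      = ∑ k ∈ Finset.range (n + 1),
          (-1 : ℝ) ^ k * (n.choose k : ℝ) * (((n - k).factorial : ℝ) * 2 ^ (n - k)) := by
    exact_mod_cast congrArg (fun z : ℤ => (z : ℝ)) h
  rw [h', Finset.mul_sum]
  refine Finset.sum_congr rfl fun k hk => ?_
  have hkn : k ≤ n := Nat.lt_succ_iff.mp (Finset.mem_range.mp hk)
  have hch : (n.choose k : ℝ) = (n.factorial : ℝ) / ((k.factorial : ℝ) * ((n - k).factorial : ℝ)) :=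
    Nat.cast_choose ℝ hkn
  have h2p : (2 : ℝ) ^ (n - k) * 2 ^ k = 2 ^ n := by
    rw [← pow_add, Nat.sub_add_cancel hkn]
  have hneg : (-(1/2) : ℝ) ^ k = (-1) ^ k / 2 ^ k := by
    rw [show (-(1/2) : ℝ) = (-1) / 2 by norm_num, div_pow]
  have hk0 : ((k.factorial : ℝ)) ≠ 0 := Nat.cast_ne_zero.mpr k.factorial_ne_zero
  have hnk0 : (((n - k).factorial : ℝ)) ≠ 0 := Nat.cast_ne_zero.mpr (n - k).factorial_ne_zero
  rw [hch, hneg]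
  field_simp
  linear_combination h2p


theorem statement15 (n : ℕ) :
    |(signedDerangementCount n : ℝ) -
      2 ^ n * (n.factorial : ℝ) / Real.sqrt (Real.exp 1)| < 1 / 2 := by
  have hsqrt : Real.sqrt (Real.exp 1) = Real.exp (1/2) := by
    rw [show Real.exp 1 = Real.exp (1/2) * Real.exp (1/2) by
        rw [← Real.exp_add]; norm_num,
      Real.sqrt_mul_self (Real.exp_pos _).le]
  set A : ℝ := ∑ k ∈ Finset.range (n + 1), (-(1/2) : ℝ) ^ k / (k.factorial : ℝ) with hA
  have hdiff : (signedDerangementCount n : ℝ) -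
      2 ^ n * (n.factorial : ℝ) / Real.sqrt (Real.exp 1)
      = 2 ^ n * (n.factorial : ℝ) * (A - Real.exp (-(1/2))) := by
    rw [hA, signedDerangementCount_real, hsqrt, Real.exp_neg, div_eq_mul_inv]; ring
  have hxabs : |(-(1/2) : ℝ)| = 1/2 := by rw [abs_neg, abs_of_nonneg] <;> norm_num
  have hexp : |A - Real.exp (-(1/2))|
      ≤ (1/2 : ℝ) ^ (n+1) * (((n+1).succ : ℝ) / (((n+1).factorial : ℝ) * ((n+1 : ℕ) : ℝ))) := by
    have hb := Real.exp_bound (x := -(1/2)) (by rw [hxabs]; norm_num) (n := n + 1)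
      (Nat.succ_pos n)
    rw [hxabs] at hb
    rw [abs_sub_comm]
    exact hb
  have hmul : Real.exp (1/2) * Real.exp (-(1/2)) = 1 := by rw [← Real.exp_add]; norm_num
  have he2 : Real.exp (1/2) < 2 := by
    nlinarith [Real.exp_one_lt_d9, Real.exp_pos (1/2 : ℝ),
      (by rw [← Real.exp_add]; norm_num : Real.exp (1/2) * Real.exp (1/2) = Real.exp 1)]
  rcases Nat.eq_zero_or_pos n with hn | hn
  · subst hn
    have hA1 : A = 1 := by simp [hA]
    have h1 : (2:ℝ) ^ (0:ℕ) * ((Nat.factorial 0 : ℕ) : ℝ) * (A - Real.exp (-(1/2)))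
        = 1 - Real.exp (-(1/2)) := by simp [hA1]
    rw [hdiff, h1]
    have hgt : (1/2 : ℝ) < Real.exp (-(1/2)) := by
      nlinarith [Real.exp_pos (1/2 : ℝ), Real.exp_pos (-(1/2) : ℝ)]
    have hlt1 : Real.exp (-(1/2)) < 1 := by
      calc Real.exp (-(1/2)) < Real.exp 0 := Real.exp_lt_exp.mpr (by norm_num)
        _ = 1 := Real.exp_zero
    rw [abs_of_nonneg (by linarith)]
    linarith
  · rw [hdiff, abs_mul,
      abs_of_nonneg (by positivity : (0:ℝ) ≤ 2 ^ n * (n.factorial : ℝ))]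
    have hFne : ((n.factorial : ℕ) : ℝ) ≠ 0 := Nat.cast_ne_zero.mpr n.factorial_ne_zero
    calc 2 ^ n * (n.factorial : ℝ) * |A - Real.exp (-(1/2))|
        ≤ 2 ^ n * (n.factorial : ℝ) *
            ((1/2 : ℝ) ^ (n+1) * (((n+1).succ : ℝ) / (((n+1).factorial : ℝ) * ((n+1 : ℕ) : ℝ)))) :=
          mul_le_mul_of_nonneg_left hexp (by positivity)
      _ = ((n : ℝ) + 2) / (2 * ((n : ℝ) + 1) ^ 2) := by
          have hf : (((n+1).factorial : ℕ) : ℝ) = ((n : ℝ) + 1) * (n.factorial : ℝ) := by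
            rw [Nat.factorial_succ]; push_cast; ring
          rw [hf]
          push_cast
          rw [show ((1:ℝ)/2) ^ (n+1) = 1 / (2 ^ (n+1)) by rw [div_pow, one_pow]]
          have h2ne : (2:ℝ) ^ (n+1) ≠ 0 := by positivity
          have hn1 : ((n : ℝ) + 1) ≠ 0 := by positivity
          field_simp
          ring
      _ < 1/2 := by
          rw [div_lt_div_iff₀ (by positivity) (by norm_num)]
          have h1n : (1:ℝ) ≤ (n : ℝ) := by exact_mod_cast hn
          nlinarith
end

section
/- For every n ≥ 1, the identity n · D_{n−1}^± = (−1)^{n+1} + Σ_{i=0}^{n} (−1)^i · 2^{n−i} · C(n,i) · (i+1) · (n−i)! holds, where D_{n−1}^± is the signed derangement number. -/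
open Finset Equiv Equiv.Perm

/-- Signed derangements on a general type. -/
abbrev SDT (α : Type*) : Type _ :=
  {p : Equiv.Perm α × (α → Bool) // ∀ i, ¬(p.1 i = i ∧ p.2 i = true)}

lemma signedDerangementCount_eq_s17 (m : ℕ) :
    signedDerangementCount m = Nat.card (SDT (Fin m)) := rfl

/-- Transfer of signed derangements along an equivalence. -/
def sdCongr {α β : Type*} (e : α ≃ β) : SDT α ≃ SDT β :=
  Equiv.subtypeEquiv ((e.permCongr).prodCongr (e.arrowCongr (Equiv.refl Bool))) (by
    intro p
    rw [Equiv.forall_congr e (q := fun j => ¬((e.permCongr p.1) j = j ∧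
      (e.arrowCongr (Equiv.refl Bool) p.2) j = true))]
    · rfl
    · intro a
      simp [Equiv.permCongr_apply, Equiv.arrowCongr_apply])

lemma natCard_SDT (α : Type*) [Fintype α] [DecidableEq α] :
    Nat.card (SDT α) = signedDerangementCount (Fintype.card α) := by
  rw [signedDerangementCount_eq_s17]
  exact Nat.card_congr (sdCongr (Fintype.equivFin α))

def fz (m : ℕ) : ℤ :=
  ∑ k ∈ Finset.range (m + 1),
    (-1) ^ k * 2 ^ (m - k) * (m.choose k : ℤ) * ((m - k).factorial : ℤ)

variable {m : ℕ}


lemma mem_iff_of_fix {F : Finset (Fin m)} {p : Equiv.Perm (Fin m) × (Fin m → Bool)}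
    (hp : (Finset.univ.filter fun i => p.1 i = i ∧ p.2 i = true) = F) (i : Fin m) :
    i ∈ F ↔ (p.1 i = i ∧ p.2 i = true) := by
  rw [← hp]; simp

lemma compl_invariant {F : Finset (Fin m)} {p : Equiv.Perm (Fin m) × (Fin m → Bool)}
    (hp : (Finset.univ.filter fun i => p.1 i = i ∧ p.2 i = true) = F) (i : Fin m) :
    i ∉ F ↔ p.1 i ∉ F := by
  constructor
  · intro hi hσ
    obtain ⟨h1, h2⟩ := (mem_iff_of_fix hp _).mp hσ
    have heq : p.1 i = i := p.1.injective h1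
    exact hi ((mem_iff_of_fix hp i).mpr ⟨heq, heq ▸ h2⟩)
  · intro hσ hi
    have := ((mem_iff_of_fix hp i).mp hi).1
    exact hσ (by rw [this]; exact hi)

/-- The fiber over `F` of the fixed-point-set map is equivalent to signed
derangements on the complement of `F`. -/
def fiberEquiv (F : Finset (Fin m)) :
    {p : Equiv.Perm (Fin m) × (Fin m → Bool) //
       (Finset.univ.filter fun i => p.1 i = i ∧ p.2 i = true) = F} ≃
    SDT {i : Fin m // i ∉ F} where
  toFun p :=
    ⟨(p.1.1.subtypePerm (fun x => (compl_invariant p.2 x).symm), fun x => p.1.2 x.1), by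
      rintro ⟨i, hi⟩ ⟨h1, h2⟩
      have hv : p.1.1 i = i := congrArg Subtype.val h1
      exact hi ((mem_iff_of_fix p.2 i).mpr ⟨hv, h2⟩)⟩
  invFun q :=
    ⟨(Equiv.Perm.ofSubtype q.1.1, fun i => if h : i ∉ F then q.1.2 ⟨i, h⟩ else true), by
      ext i
      simp only [Finset.mem_filter, Finset.mem_univ, true_and]
      by_cases h : i ∉ F
      · simp only [h, dif_pos]
        constructor
        · rintro ⟨h1, h2⟩
          rw [Equiv.Perm.ofSubtype_apply_of_mem q.1.1 h] at h1
          exact absurd ⟨Subtype.ext h1, h2⟩ (q.2 ⟨i, h⟩)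
        · intro hi; exact hi.elim
      · have hF : i ∈ F := not_not.mp h
        simp only [h, dif_neg, not_false_iff]
        rw [Equiv.Perm.ofSubtype_apply_of_not_mem q.1.1 h]
        simp [hF]⟩
  left_inv p := by
    apply Subtype.ext
    apply Prod.ext
    · exact Equiv.Perm.ofSubtype_subtypePerm (fun x => (compl_invariant p.2 x).symm)
        (fun x hne => fun hx => hne ((mem_iff_of_fix p.2 x).mp hx).1)
    · funext i
      by_cases h : i ∉ F
      · simp only [dif_pos h]
      · simp only [dif_neg h]
        exact (((mem_iff_of_fix p.2 i).mp (not_not.mp h)).2).symm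
  right_inv q := by
    apply Subtype.ext
    apply Prod.ext
    · exact Equiv.Perm.subtypePerm_ofSubtype q.1.1
    · funext x
      simp only [dif_pos x.2]

lemma card_fiber (F : Finset (Fin m)) :
    (Finset.univ.filter fun p : Equiv.Perm (Fin m) × (Fin m → Bool) =>
        (Finset.univ.filter fun i => p.1 i = i ∧ p.2 i = true) = F).card
      = signedDerangementCount (m - F.card) := by
  rw [← Fintype.card_subtype, ← Nat.card_eq_fintype_card, Nat.card_congr (fiberEquiv F),
    natCard_SDT]
  congr 1
  simp [Fintype.card_subtype_compl]

lemma count_T (m : ℕ) : 2 ^ m * m.factorial =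
    ∑ k ∈ Finset.range (m + 1), m.choose k * signedDerangementCount (m - k) := by
  have h1 : (Finset.univ : Finset (Equiv.Perm (Fin m) × (Fin m → Bool))).card =
      ∑ F ∈ (Finset.univ : Finset (Finset (Fin m))),
        (Finset.univ.filter fun p : Equiv.Perm (Fin m) × (Fin m → Bool) =>
          (Finset.univ.filter fun i => p.1 i = i ∧ p.2 i = true) = F).card :=
    Finset.card_eq_sum_card_fiberwise (fun x _ => Finset.mem_univ _)
  have h2 : (Finset.univ : Finset (Equiv.Perm (Fin m) × (Fin m → Bool))).card
      = 2 ^ m * m.factorial := by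
    simp [Finset.card_univ, Fintype.card_perm, mul_comm]
  rw [← h2, h1]
  have h3 : (Finset.univ : Finset (Finset (Fin m))) = Finset.powerset Finset.univ :=
    (Finset.powerset_univ).symm
  rw [h3]
  rw [Finset.sum_powerset (Finset.univ : Finset (Fin m))
    (fun F => (Finset.univ.filter fun p : Equiv.Perm (Fin m) × (Fin m → Bool) =>
      (Finset.univ.filter fun i => p.1 i = i ∧ p.2 i = true) = F).card)]
  rw [Finset.card_univ, Fintype.card_fin]
  refine Finset.sum_congr rfl fun j hj => ?_
  have : ∀ F ∈ Finset.powersetCard j (Finset.univ : Finset (Fin m)),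
      (Finset.univ.filter fun p : Equiv.Perm (Fin m) × (Fin m → Bool) =>
        (Finset.univ.filter fun i => p.1 i = i ∧ p.2 i = true) = F).card
      = signedDerangementCount (m - j) := by
    intro F hF
    rw [card_fiber F, (Finset.mem_powersetCard.mp hF).2]
  rw [Finset.sum_congr rfl this, Finset.sum_const, Finset.card_powersetCard,
    Finset.card_univ, Fintype.card_fin, smul_eq_mul]

lemma nat_key (n k : ℕ) (hk : k ≤ n) :
    (n + 1).choose k * (n + 1 - k).factorial = (n + 1) * (n.choose k * (n - k).factorial) := by
  have hpos : 0 < k.factorial := Nat.factorial_pos k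
  apply Nat.eq_of_mul_eq_mul_right hpos
  have e1 : (n + 1).choose k * (n + 1 - k).factorial * k.factorial = (n + 1).factorial := by
    rw [mul_right_comm]
    exact Nat.choose_mul_factorial_mul_factorial (le_trans hk (Nat.le_succ n))
  have e2 : n.choose k * (n - k).factorial * k.factorial = n.factorial := by
    rw [mul_right_comm]
    exact Nat.choose_mul_factorial_mul_factorial hk
  rw [e1, mul_assoc, mul_assoc, ← mul_assoc (n.choose k), e2, ← Nat.factorial_succ]

lemma fz_rec (n : ℕ) : fz (n + 1) = 2 * (n + 1) * fz n + (-1) ^ (n + 1) := by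
  unfold fz
  rw [Finset.sum_range_succ]
  have hlast : (-1 : ℤ) ^ (n + 1) * 2 ^ (n + 1 - (n + 1)) * ((n + 1).choose (n + 1) : ℤ) *
      (((n + 1) - (n + 1)).factorial : ℤ) = (-1) ^ (n + 1) := by
    simp
  rw [hlast]
  congr 1
  rw [Finset.mul_sum]
  refine Finset.sum_congr rfl fun k hk => ?_
  have hk' : k ≤ n := Nat.lt_succ_iff.mp (Finset.mem_range.mp hk)
  have h2 : n + 1 - k = (n - k) + 1 := by omega
  have hcast : ((n + 1).choose k : ℤ) * ((n + 1 - k).factorial : ℤ)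
      = (n + 1) * ((n.choose k : ℤ) * ((n - k).factorial : ℤ)) := by
    exact_mod_cast congrArg (Nat.cast : ℕ → ℤ) (nat_key n k hk')
  rw [h2] at hcast ⊢
  rw [pow_succ]
  push_cast at hcast ⊢
  linear_combination (-1 : ℤ) ^ k * 2 ^ (n - k) * 2 * hcast

lemma fz_reflect (j : ℕ) :
    fz j = ∑ t ∈ Finset.range (j + 1),
      (-1) ^ (j - t) * 2 ^ t * (j.choose t : ℤ) * (t.factorial : ℤ) := by
  unfold fz
  rw [← Finset.sum_range_reflect]
  refine Finset.sum_congr rfl fun t ht => ?_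
  have ht' : t ≤ j := Nat.lt_succ_iff.mp (Finset.mem_range.mp ht)
  have e : j + 1 - 1 - t = j - t := by omega
  rw [e, Nat.sub_sub_self ht', Nat.choose_symm ht']

lemma inversion_s17 (m : ℕ) :
    ∑ j ∈ Finset.range (m + 1), (m.choose j : ℤ) * fz j = 2 ^ m * m.factorial := by
  have h1 : ∑ j ∈ Finset.range (m + 1), (m.choose j : ℤ) * fz j
      = ∑ j ∈ Finset.Ico 0 (m + 1), ∑ t ∈ Finset.Ico 0 (j + 1),
          (m.choose j : ℤ) * ((-1) ^ (j - t) * 2 ^ t * (j.choose t : ℤ) * (t.factorial : ℤ)) := by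
    simp only [← Finset.range_eq_Ico]
    refine Finset.sum_congr rfl fun j _ => ?_
    rw [fz_reflect j, Finset.mul_sum]
  rw [h1, ← Finset.sum_Ico_Ico_comm 0 (m + 1)
    (fun t j => (m.choose j : ℤ) * ((-1) ^ (j - t) * 2 ^ t * (j.choose t : ℤ) * (t.factorial : ℤ)))]
  have h2 : ∀ t ∈ Finset.Ico 0 (m + 1),
      (∑ j ∈ Finset.Ico t (m + 1),
        (m.choose j : ℤ) * ((-1) ^ (j - t) * 2 ^ t * (j.choose t : ℤ) * (t.factorial : ℤ)))
      = if t = m then (2 : ℤ) ^ m * m.factorial else 0 := by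
    intro t ht
    have htm : t ≤ m := by
      have := (Finset.mem_Ico.mp ht).2; omega
    rw [Finset.sum_Ico_eq_sum_range]
    have hrw : ∀ s ∈ Finset.range (m + 1 - t),
        (m.choose (t + s) : ℤ) * ((-1) ^ (t + s - t) * 2 ^ t * ((t + s).choose t : ℤ) *
          (t.factorial : ℤ))
        = ((m.choose t : ℤ) * 2 ^ t * (t.factorial : ℤ)) * ((-1) ^ s * ((m - t).choose s : ℤ)) := by
      intro s hs
      have hs' : t + s ≤ m := by
        have := Finset.mem_range.mp hs; omega
      have hchoose : (m.choose (t + s)) * ((t + s).choose t) = m.choose t * (m - t).choose s := by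
        have := Nat.choose_mul (n := m) (Nat.le_add_right t s)
        simpa using this
      have : t + s - t = s := by omega
      rw [this]
      have hc : ((m.choose (t + s) * (t + s).choose t : ℕ) : ℤ)
          = ((m.choose t * (m - t).choose s : ℕ) : ℤ) := by exact_mod_cast congrArg (Nat.cast : ℕ → ℤ) hchoose
      push_cast at hc ⊢
      linear_combination ((t.factorial : ℤ) * (-1) ^ s * 2 ^ t) * hc
    rw [Finset.sum_congr rfl hrw, ← Finset.mul_sum]
    have hmt : m + 1 - t = (m - t) + 1 := by omega
    rw [hmt, Int.alternating_sum_range_choose]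
    by_cases h : t = m
    · subst h
      simp [Nat.choose_self]
    · have : m - t ≠ 0 := by omega
      simp [this, h]
  rw [Finset.sum_congr rfl h2, ← Finset.range_eq_Ico, Finset.sum_ite_eq' (Finset.range (m + 1)) m]
  simp


lemma D_eq_fz (m : ℕ) : (signedDerangementCount m : ℤ) = fz m := by
  induction m using Nat.strong_induction_on with
  | _ m ih =>
    have hT : ((2 : ℤ)) ^ m * m.factorial
        = ∑ k ∈ Finset.range (m + 1), (m.choose k : ℤ) * (signedDerangementCount (m - k) : ℤ) := by
      have := count_T m
      exact_mod_cast congrArg (Nat.cast : ℕ → ℤ) this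
    have hrefl : ∑ k ∈ Finset.range (m + 1), (m.choose k : ℤ) * (signedDerangementCount (m - k) : ℤ)
        = ∑ j ∈ Finset.range (m + 1), (m.choose j : ℤ) * (signedDerangementCount j : ℤ) := by
      rw [← Finset.sum_range_reflect]
      refine Finset.sum_congr rfl fun j hj => ?_
      have hj' : j ≤ m := Nat.lt_succ_iff.mp (Finset.mem_range.mp hj)
      have e1 : m + 1 - 1 - j = m - j := by omega
      rw [e1, Nat.choose_symm hj', Nat.sub_sub_self hj']
    have key : ∑ j ∈ Finset.range (m + 1), (m.choose j : ℤ) * (signedDerangementCount j : ℤ)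
        = ∑ j ∈ Finset.range (m + 1), (m.choose j : ℤ) * fz j := by
      rw [← hrefl, ← hT, inversion_s17]
    rw [Finset.sum_range_succ, Finset.sum_range_succ] at key
    have hsum : ∑ j ∈ Finset.range m, (m.choose j : ℤ) * (signedDerangementCount j : ℤ)
        = ∑ j ∈ Finset.range m, (m.choose j : ℤ) * fz j :=
      Finset.sum_congr rfl fun j hj => by rw [ih j (Finset.mem_range.mp hj)]
    rw [hsum, Nat.choose_self] at key
    simpa using key

lemma S_eq (m : ℕ) :
    ∑ i ∈ Finset.range (m + 2),
        (-1 : ℤ) ^ i * 2 ^ (m + 1 - i) * ((m + 1).choose i : ℤ) * ((i : ℤ) + 1) *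
          ((m + 1 - i).factorial : ℤ)
      = fz (m + 1) - ((m : ℤ) + 1) * fz m := by
  have split : ∀ i, (-1 : ℤ) ^ i * 2 ^ (m + 1 - i) * ((m + 1).choose i : ℤ) * ((i : ℤ) + 1) *
          ((m + 1 - i).factorial : ℤ)
      = (-1 : ℤ) ^ i * 2 ^ (m + 1 - i) * ((m + 1).choose i : ℤ) * ((m + 1 - i).factorial : ℤ)
        + (-1 : ℤ) ^ i * 2 ^ (m + 1 - i) * ((m + 1).choose i : ℤ) * (i : ℤ) *
          ((m + 1 - i).factorial : ℤ) := by
    intro i; ring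
  rw [Finset.sum_congr rfl (fun i _ => split i), Finset.sum_add_distrib]
  have h1 : ∑ i ∈ Finset.range (m + 2),
      (-1 : ℤ) ^ i * 2 ^ (m + 1 - i) * ((m + 1).choose i : ℤ) * ((m + 1 - i).factorial : ℤ)
      = fz (m + 1) := rfl
  have h2 : ∑ i ∈ Finset.range (m + 2),
      (-1 : ℤ) ^ i * 2 ^ (m + 1 - i) * ((m + 1).choose i : ℤ) * (i : ℤ) *
        ((m + 1 - i).factorial : ℤ)
      = -((m : ℤ) + 1) * fz m := by
    rw [Finset.sum_range_succ']
    have hz : (-1 : ℤ) ^ 0 * 2 ^ (m + 1 - 0) * ((m + 1).choose 0 : ℤ) * ((0 : ℕ) : ℤ) *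
        ((m + 1 - 0).factorial : ℤ) = 0 := by simp
    rw [hz, add_zero]
    unfold fz
    rw [Finset.mul_sum]
    refine Finset.sum_congr rfl fun j hj => ?_
    have hj' : j ≤ m := Nat.lt_succ_iff.mp (Finset.mem_range.mp hj)
    have e1 : m + 1 - (j + 1) = m - j := by omega
    have hch : (m + 1) * m.choose j = (m + 1).choose (j + 1) * (j + 1) :=
      Nat.add_one_mul_choose_eq m j
    have hchz : ((m : ℤ) + 1) * (m.choose j : ℤ) = ((m + 1).choose (j + 1) : ℤ) * ((j : ℤ) + 1) := by
      exact_mod_cast congrArg (Nat.cast : ℕ → ℤ) hch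
    rw [e1]
    push_cast
    linear_combination ((-1 : ℤ) ^ j * 2 ^ (m - j) * ((m - j).factorial : ℤ)) * hchz
  rw [h1, h2]
  ring

theorem statement17 (n : ℕ) (hn : 1 ≤ n) :
    (n : ℤ) * (signedDerangementCount (n - 1) : ℤ) =
      (-1) ^ (n + 1) + ∑ i ∈ Finset.range (n + 1),
        (-1) ^ i * 2 ^ (n - i) * (n.choose i : ℤ) * (i + 1 : ℤ) *
          ((n - i).factorial : ℤ) := by
  obtain ⟨m, rfl⟩ : ∃ m, n = m + 1 := ⟨n - 1, by omega⟩
  simp only [Nat.add_sub_cancel]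
  rw [D_eq_fz, S_eq m, fz_rec m]
  push_cast
  ring
end

section
/- For every n ≥ 1, the derangement number satisfies D_n = Σ_c (n! / (c_1!·c_2!⋯c_k!)) · Π_{i=1}^{k} (c_i − 1), where the sum ranges over all compositions c = (c_1,…,c_k) of n all of whose parts satisfy c_i ≥ 2 (for n = 1 the sum is empty and D_1 = 0). -/
open Finset Nat

lemma list_prod_factorial_dvd (l : List ℕ) : (l.map Nat.factorial).prod ∣ l.sum.factorial := by
  induction l with
  | nil => simp
  | cons a t ih =>
    simp only [List.map_cons, List.prod_cons, List.sum_cons]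
    exact mul_dvd_mul_left _ ih |>.trans (Nat.factorial_mul_factorial_dvd_factorial_add a t.sum)

lemma nd_sum' (m : ℕ) : (numDerangements m : ℤ) =
    ∑ i ∈ range (m + 1), (-1 : ℤ) ^ (m - i) * (m.choose i) * i.factorial := by
  rw [numDerangements_sum, ← Finset.sum_range_reflect]
  refine Finset.sum_congr rfl fun i hi => ?_
  have hi' : i ≤ m := by simpa [Nat.lt_succ_iff] using hi
  simp only [Nat.add_sub_cancel]
  rw [Nat.sub_sub_self hi', Nat.ascFactorial_eq_factorial_mul_choose,
    Nat.sub_add_cancel hi']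
  push_cast
  ring

lemma sum_choose_nd (n : ℕ) :
    ∑ k ∈ range (n + 1), n.choose k * numDerangements k = n.factorial := by
  have key : (∑ k ∈ range (n + 1), (n.choose k : ℤ) * numDerangements k) = n.factorial := by
    have h1 : ∀ k ∈ range (n + 1), (n.choose k : ℤ) * numDerangements k
        = ∑ i ∈ range (n + 1), (if i ≤ k then
            (-1 : ℤ) ^ (k - i) * ((n.choose i) * ((n-i).choose (k-i))) * i.factorial else 0) := by
      intro k hk
      have hk' : k ≤ n := by simpa [Nat.lt_succ_iff] using hk
      rw [nd_sum', Finset.mul_sum, ← Finset.sum_filter]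
      have hf : Finset.filter (fun i => i ≤ k) (range (n + 1)) = range (k + 1) := by
        ext i; simp [Nat.lt_succ_iff]; omega
      rw [hf]
      refine Finset.sum_congr rfl fun i hi => ?_
      have hi' : i ≤ k := by simpa [Nat.lt_succ_iff] using hi
      have hcc : n.choose k * k.choose i = n.choose i * (n - i).choose (k - i) :=
        Nat.choose_mul hi'
      have : ((n.choose k : ℤ)) * (k.choose i) = (n.choose i) * ((n-i).choose (k-i)) := by
        exact_mod_cast congrArg (Nat.cast (R := ℤ)) hcc
      calc (n.choose k : ℤ) * ((-1) ^ (k - i) * (k.choose i) * i.factorial)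
          = (-1 : ℤ) ^ (k-i) * ((n.choose k : ℤ) * (k.choose i)) * i.factorial := by ring
        _ = (-1 : ℤ) ^ (k-i) * ((n.choose i : ℤ) * ((n-i).choose (k-i))) * i.factorial := by rw [this]
    rw [Finset.sum_congr rfl h1, Finset.sum_comm]
    have h2 : ∀ i ∈ range (n + 1),
        (∑ k ∈ range (n + 1), if i ≤ k then
            (-1 : ℤ) ^ (k - i) * ((n.choose i) * ((n-i).choose (k-i))) * i.factorial else 0)
        = (n.choose i : ℤ) * i.factorial * (if n - i = 0 then 1 else 0) := by
      intro i hi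
      have hi' : i ≤ n := by simpa [Nat.lt_succ_iff] using hi
      rw [← Finset.sum_filter]
      have hf : Finset.filter (fun k => i ≤ k) (range (n + 1)) = Finset.Icc i n := by
        ext k; simp [Nat.lt_succ_iff]; omega
      rw [hf]
      have hbij : (∑ k ∈ Finset.Icc i n, (-1 : ℤ) ^ (k - i) * ((n.choose i) * ((n-i).choose (k-i))) * i.factorial)
          = ∑ m ∈ range (n - i + 1), (-1 : ℤ) ^ m * ((n.choose i) * ((n-i).choose m)) * i.factorial := by
        refine Finset.sum_nbij' (fun k => k - i) (fun m => m + i) ?_ ?_ ?_ ?_ ?_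
        · intro k hk; simp at hk ⊢; omega
        · intro m hm; simp at hm ⊢; omega
        · intro k hk; simp at hk; omega
        · intro m hm; simp at hm; omega
        · intro k hk; rfl
      rw [hbij]
      have : (∑ m ∈ range (n - i + 1), (-1 : ℤ) ^ m * ((n.choose i) * ((n-i).choose m)) * i.factorial)
          = (n.choose i : ℤ) * i.factorial * ∑ m ∈ range (n - i + 1), (-1 : ℤ) ^ m * ((n-i).choose m) := by
        rw [Finset.mul_sum]; refine Finset.sum_congr rfl fun m hm => by ring
      rw [this, Int.alternating_sum_range_choose]
    rw [Finset.sum_congr rfl h2]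
    rw [Finset.sum_eq_single n]
    · simp [Nat.choose_self]
    · intro i hi hne
      have : n - i ≠ 0 := by simp at hi; omega
      simp [this]
    · intro h; simp at h
  exact_mod_cast key

lemma claimB (m : ℕ) :
    ∑ j ∈ Finset.Icc 2 (m+1), (m+1).choose j * (j-1) * numDerangements (m+1-j)
      = numDerangements (m+1) := by
  have hre : ∑ j ∈ Finset.Icc 2 (m+1), (m+1).choose j * (j-1) * numDerangements (m+1-j)
      = ∑ k ∈ range m, (m+1).choose k * (m-k) * numDerangements k := by
    refine Finset.sum_nbij' (fun j => m+1-j) (fun k => m+1-k) ?_ ?_ ?_ ?_ ?_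
    · intro j hj; simp at hj ⊢; omega
    · intro k hk; simp at hk ⊢; omega
    · intro j hj; simp at hj; omega
    · intro k hk; simp at hk; omega
    · intro j hj
      simp at hj
      have h1 : (m+1).choose j = (m+1).choose (m+1-j) := (Nat.choose_symm (by omega)).symm
      have h2 : j - 1 = m - (m+1-j) := by omega
      rw [h1, h2]
  rw [hre]
  -- key equations
  have e1 : (∑ k ∈ range m, (m+1).choose k * (m-k) * numDerangements k)
      + (∑ k ∈ range m, (m+1).choose k * numDerangements k)
      = (m+1) * ∑ k ∈ range m, m.choose k * numDerangements k := by
    rw [Finset.mul_sum, ← Finset.sum_add_distrib]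
    refine Finset.sum_congr rfl fun k hk => ?_
    have hk' : k < m := by simpa using hk
    have key : (m+1).choose k * (m+1-k) = (m+1) * m.choose k := by
      have a1 : (m+1).choose (k+1) * (k+1) = (m+1).choose k * (m+1-k) :=
        Nat.choose_succ_right_eq (m+1) k
      have a2 : (m+1) * m.choose k = (m+1).choose (k+1) * (k+1) :=
        Nat.add_one_mul_choose_eq m k
      omega
    have : (m+1).choose k * (m-k) * numDerangements k + (m+1).choose k * numDerangements k
        = ((m+1).choose k * (m+1-k)) * numDerangements k := by
      have : (m+1).choose k * (m-k) + (m+1).choose k = (m+1).choose k * (m+1-k) := by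
        have : m + 1 - k = (m - k) + 1 := by omega
        rw [this, Nat.mul_add, Nat.mul_one]
      rw [← this, Nat.add_mul]
    rw [this, key, Nat.mul_assoc]
  have e2 : (∑ k ∈ range m, (m+1).choose k * numDerangements k)
      + (m+1) * numDerangements m + numDerangements (m+1) = (m+1).factorial := by
    have := sum_choose_nd (m+1)
    rw [Finset.sum_range_succ, Finset.sum_range_succ] at this
    simpa [Nat.choose_succ_self_right] using this
  have e3 : (∑ k ∈ range m, m.choose k * numDerangements k) + numDerangements m
      = m.factorial := by
    have := sum_choose_nd m
    rw [Finset.sum_range_succ] at this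
    simpa using this
  have e4 : (m+1) * (∑ k ∈ range m, m.choose k * numDerangements k)
      + (m+1) * numDerangements m = (m+1).factorial := by
    rw [← Nat.mul_add, e3, Nat.factorial_succ]
  linarith [e1, e2, e4]

lemma weight_cons (n j : ℕ) (l : List ℕ) (hj1 : 1 ≤ j) (hjn : j ≤ n) (hl : l.sum = n - j) :
    n.factorial / ((j :: l).map Nat.factorial).prod * ((j :: l).map (fun x => x - 1)).prod
      = n.choose j * (j - 1) *
        ((n-j).factorial / (l.map Nat.factorial).prod * (l.map (fun x => x - 1)).prod) := by
  set P := (l.map Nat.factorial).prod with hP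
  set Q := (l.map (fun x => x - 1)).prod with hQ
  have hdvd : P ∣ (n - j).factorial := by
    rw [← hl]; exact list_prod_factorial_dvd l
  obtain ⟨q, hq⟩ := hdvd
  have hPpos : 0 < P := by
    refine List.prod_pos ?_
    intro x hx
    simp only [List.mem_map] at hx
    obtain ⟨a, _, rfl⟩ := hx
    exact Nat.factorial_pos a
  have hfac : n.choose j * j.factorial * (n-j).factorial = n.factorial :=
    Nat.choose_mul_factorial_mul_factorial hjn
  have h1 : n.factorial / ((j :: l).map Nat.factorial).prod = n.choose j * q := by
    have : n.factorial = (j.factorial * P) * (n.choose j * q) := by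
      rw [← hfac, hq]; ring
    rw [List.map_cons, List.prod_cons, this,
      Nat.mul_div_cancel_left _ (Nat.mul_pos (Nat.factorial_pos j) hPpos)]
  have h2 : (n-j).factorial / P = q := by
    rw [hq, Nat.mul_div_cancel_left _ hPpos]
  rw [h1, h2, List.map_cons, List.prod_cons]
  ring

lemma claimA (m : ℕ) :
    (∑ c ∈ Finset.univ.filter (fun c : Composition (m+1) => ∀ x ∈ c.blocks, 2 ≤ x),
      ((m+1).factorial / (c.blocks.map Nat.factorial).prod) *
        (c.blocks.map (fun x => x - 1)).prod)
    = ∑ j ∈ Finset.Icc 2 (m+1), (m+1).choose j * (j-1) *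
        (∑ c ∈ Finset.univ.filter (fun c : Composition (m+1-j) => ∀ x ∈ c.blocks, 2 ≤ x),
          ((m+1-j).factorial / (c.blocks.map Nat.factorial).prod) *
            (c.blocks.map (fun x => x - 1)).prod) := by
  have hassoc : ∀ j ∈ Finset.Icc 2 (m+1), (m+1).choose j * (j-1) *
        (∑ c ∈ Finset.univ.filter (fun c : Composition (m+1-j) => ∀ x ∈ c.blocks, 2 ≤ x),
          ((m+1-j).factorial / (c.blocks.map Nat.factorial).prod) *
            (c.blocks.map (fun x => x - 1)).prod)
      = ∑ c ∈ Finset.univ.filter (fun c : Composition (m+1-j) => ∀ x ∈ c.blocks, 2 ≤ x),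
          (m+1).choose j * (j-1) * (((m+1-j).factorial / (c.blocks.map Nat.factorial).prod) *
            (c.blocks.map (fun x => x - 1)).prod) := fun j _ => Finset.mul_sum _ _ _
  rw [Finset.sum_congr rfl hassoc, Finset.sum_sigma']
  refine Finset.sum_bij' (fun c hc => ?_) (fun p hp => ?_) ?_ ?_ ?_ ?_ ?_
  · -- forward: composition ↦ ⟨headI, tail⟩
    refine ⟨c.blocks.headI, ⟨c.blocks.tail, ?_, ?_⟩⟩
    · intro i hi
      exact c.blocks_pos (List.mem_of_mem_tail hi)
    · have hne : c.blocks ≠ [] := by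
        intro h
        have := c.blocks_sum
        rw [h] at this; simp at this
      obtain ⟨b, t, hbt⟩ := List.exists_cons_of_ne_nil hne
      have := c.blocks_sum
      rw [hbt] at this ⊢
      simp only [List.headI_cons, List.tail_cons]
      simp at this
      omega
  · -- backward: ⟨j, c'⟩ ↦ cons composition
    simp only [Finset.mem_sigma, Finset.mem_Icc, Finset.mem_filter] at hp
    refine ⟨p.1 :: p.2.blocks, ?_, ?_⟩
    · intro i hi
      rcases List.mem_cons.mp hi with h | h
      · omega
      · exact p.2.blocks_pos h
    · simp only [List.sum_cons, p.2.blocks_sum]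
      omega
  · -- forward maps into sigma set
    intro c hc
    simp only [Finset.mem_filter, Finset.mem_univ, true_and] at hc
    simp only [Finset.mem_sigma, Finset.mem_Icc, Finset.mem_filter, Finset.mem_univ, true_and]
    have hne : c.blocks ≠ [] := by
      intro h
      have := c.blocks_sum
      rw [h] at this; simp at this
    obtain ⟨b, t, hbt⟩ := List.exists_cons_of_ne_nil hne
    have hsum := c.blocks_sum
    rw [hbt] at hsum
    simp at hsum
    constructor
    · constructor
      · simp [hbt]
        exact hc _ (by rw [hbt]; exact List.mem_cons_self)
      · simp [hbt]; omega
    · intro x hx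
      simp only [hbt, List.tail_cons] at hx
      exact hc _ (by rw [hbt]; exact List.mem_cons_of_mem b hx)
  · -- backward maps into filter set
    intro p hp
    simp only [Finset.mem_sigma, Finset.mem_Icc, Finset.mem_filter, Finset.mem_univ, true_and] at hp
    simp only [Finset.mem_filter, Finset.mem_univ, true_and]
    intro x hx
    rcases List.mem_cons.mp hx with h | h
    · omega
    · exact hp.2 x h
  · -- left inverse
    intro c hc
    apply Composition.ext
    have hne : c.blocks ≠ [] := by
      intro h
      have := c.blocks_sum
      rw [h] at this; simp at this
    obtain ⟨b, t, hbt⟩ := List.exists_cons_of_ne_nil hne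
    simp [hbt]
  · -- right inverse
    intro p hp
    rcases p with ⟨j, c'⟩
    rfl
  · -- values agree
    intro c hc
    simp only [Finset.mem_filter, Finset.mem_univ, true_and] at hc
    have hne : c.blocks ≠ [] := by
      intro h
      have := c.blocks_sum
      rw [h] at this; simp at this
    obtain ⟨b, t, hbt⟩ := List.exists_cons_of_ne_nil hne
    have hsum := c.blocks_sum
    rw [hbt] at hsum
    simp only [List.sum_cons] at hsum
    have hb2 : 2 ≤ b := hc _ (by rw [hbt]; exact List.mem_cons_self)
    conv_lhs => rw [hbt]
    rw [weight_cons (m+1) b t (by omega) (by omega) (by omega)]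
    simp [hbt]

lemma S_zero :
    (∑ c ∈ Finset.univ.filter (fun c : Composition 0 => ∀ x ∈ c.blocks, 2 ≤ x),
      ((0:ℕ).factorial / (c.blocks.map Nat.factorial).prod) *
        (c.blocks.map (fun x => x - 1)).prod) = 1 := by
  have hblocks : ∀ c : Composition 0, c.blocks = [] := by
    intro c
    have hsum := c.blocks_sum
    rcases h : c.blocks with _ | ⟨b, t⟩
    · rfl
    · exfalso
      rw [h] at hsum
      have hb := c.blocks_pos (by rw [h]; exact List.mem_cons_self)
      simp at hsum
      omega
  have hfilter : (Finset.univ.filter (fun c : Composition 0 => ∀ x ∈ c.blocks, 2 ≤ x))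
      = Finset.univ := by
    apply Finset.filter_true_of_mem
    intro c _ x hx
    rw [hblocks c] at hx
    simp at hx
  rw [hfilter]
  have hcard : (Finset.univ : Finset (Composition 0)).card = 1 := by
    rw [Finset.card_univ, composition_card]
    norm_num
  have hone : ∀ c ∈ (Finset.univ : Finset (Composition 0)),
      ((0:ℕ).factorial / (c.blocks.map Nat.factorial).prod) *
        (c.blocks.map (fun x => x - 1)).prod = 1 := by
    intro c _
    rw [hblocks c]
    simp
  rw [Finset.sum_congr rfl hone, Finset.sum_const, hcard]
  simp

lemma dc_eq_nd (n : ℕ) : derangementCount n = numDerangements n := by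
  have h0 : derangementCount n = Nat.card (derangements (Fin n)) := rfl
  rw [h0, Nat.card_eq_fintype_card, card_derangements_fin_eq_numDerangements]

lemma main_aux : ∀ n : ℕ, 1 ≤ n →
    numDerangements n =
      ∑ c ∈ Finset.univ.filter (fun c : Composition n => ∀ x ∈ c.blocks, 2 ≤ x),
        (n.factorial / (c.blocks.map Nat.factorial).prod) *
          (c.blocks.map (fun x => x - 1)).prod := by
  intro n
  induction n using Nat.strong_induction_on with
  | _ n ih =>
    intro hn
    obtain ⟨m, rfl⟩ : ∃ m, n = m + 1 := ⟨n - 1, by omega⟩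
    rw [claimA, ← claimB]
    refine Finset.sum_congr rfl fun j hj => ?_
    simp only [Finset.mem_Icc] at hj
    congr 1
    rcases Nat.eq_zero_or_pos (m + 1 - j) with h | h
    · rw [h]
      rw [show (numDerangements 0) = 1 from rfl]
      exact (S_zero).symm
    · exact ih (m + 1 - j) (by omega) h

theorem statement18 (n : ℕ) (hn : 1 ≤ n) :
    derangementCount n =
      ∑ c ∈ Finset.univ.filter (fun c : Composition n => ∀ x ∈ c.blocks, 2 ≤ x),
        (n.factorial / (c.blocks.map Nat.factorial).prod) *
          (c.blocks.map (fun x => x - 1)).prod := by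
  rw [dc_eq_nd]
  exact main_aux n hn
end
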